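/- Let z be a submodular function on the finite set I. The map Φ_z is surjective onto the set of nonempty faces of Π(z), the image of Ψ_z restricted to nonempty faces is exactly the set Pre(z) of preorders conforming to z, and Φ_z and Ψ_z restrict to mutually inverse bijections between Pre(z) and the set of nonempty faces of Π(z). -/

import Mathlib

open scoped Classical

/-- A preorder on `X`, bundled as a reflexive and transitive relation. -/
structure Preo (X : Type*) where
  le : X → X → Prop
  le_refl : ∀ x, le x x
  le_trans : ∀ {x y z}, le x y → le y z → le x z

namespace Preo

variable {X : Type*}

/-- The refinement partial order `P ⪯ Q` on preorders: `x ≤_P y` implies `x ≤_Q y`. -/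
def Le (P Q : Preo X) : Prop := ∀ ⦃a b⦄, P.le a b → Q.le a b

/-- The opposite preorder. -/
def op (P : Preo X) : Preo X where
  le a b := P.le b a
  le_refl x := P.le_refl x
  le_trans h h' := P.le_trans h' h

/-- The meet (pointwise intersection) of two preorders. -/
def meet (P Q : Preo X) : Preo X where
  le a b := P.le a b ∧ Q.le a b
  le_refl x := ⟨P.le_refl x, Q.le_refl x⟩
  le_trans h h' := ⟨P.le_trans h.1 h'.1, Q.le_trans h.2 h'.2⟩

/-- The join of two preorders: zigzag chains, i.e. the reflexive-transitive closure
of the union of the two relations. -/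
def join (P Q : Preo X) : Preo X where
  le a b := Relation.ReflTransGen (fun u v => P.le u v ∨ Q.le u v) a b
  le_refl _ := Relation.ReflTransGen.refl
  le_trans h h' := Relation.ReflTransGen.trans h h'

/-- The bubble relation: `a` and `b` lie in the same bubble of `P`. -/
def bubRel (P : Preo X) (a b : X) : Prop := P.le a b ∧ P.le b a

/-- `R ◁ P` : `R` is a subdivision of `P`, i.e. `R ⪯ P` and `R = P ∧ (P^op ∨ R)`. -/
def Subdiv (R P : Preo X) : Prop := R.Le P ∧ R = P.meet (P.op.join R)

/-- `P ◀ Q` : `Q` is a contraction of `P`, i.e. `P ⪯ Q` and `Q = P ∨ (P^op ∧ Q)`. -/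
def Contr (P Q : Preo X) : Prop := P.Le Q ∧ Q = P.join (P.op.meet Q)

/-- `K` is a convex subset for the preorder `P`. -/
def ConvexIn (P : Preo X) (K : Set X) : Prop :=
  ∀ ⦃x y z⦄, x ∈ K → y ∈ K → P.le x z → P.le z y → z ∈ K

/-- `K` is connected for (the restriction to `K` of) the preorder `P`:
any two of its elements are joined by a zigzag chain of comparabilities within `K`. -/
def ConnectedIn (P : Preo X) (K : Set X) : Prop :=
  ∀ ⦃x y⦄, x ∈ K → y ∈ K →
    Relation.ReflTransGen (fun u v => u ∈ K ∧ v ∈ K ∧ (P.le u v ∨ P.le v u)) x y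

/-- A total preorder. -/
def Total (P : Preo X) : Prop := ∀ a b, P.le a b ∨ P.le b a

/-- `L` is a linear extension of `P`: `L` is total, `P ⪯ L`, and the bubbles coincide. -/
def IsLinExt (P L : Preo X) : Prop :=
  L.Total ∧ P.Le L ∧ ∀ a b, P.bubRel a b ↔ L.bubRel a b

/-- A finite down-set of the preorder `P`. -/
def IsDownset (P : Preo X) (A : Finset X) : Prop :=
  ∀ ⦃x y⦄, y ∈ A → P.le x y → x ∈ A

/-- A convex finite subset of the preorder `P`. -/
def ConvexF (P : Preo X) (C : Finset X) : Prop :=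
  ∀ ⦃x y z⦄, x ∈ C → y ∈ C → P.le x z → P.le z y → z ∈ C

/-- The down-set generated by a finite set `C`. -/
noncomputable def downClosure [Fintype X] (P : Preo X) (C : Finset X) : Finset X :=
  Finset.univ.filter (fun x => ∃ y ∈ C, P.le x y)

/-- The bubble of an element `a`. -/
noncomputable def bubble [Fintype X] (P : Preo X) (a : X) : Finset X :=
  Finset.univ.filter (fun x => P.le a x ∧ P.le x a)

/-- The set of bubbles of `P`. -/
noncomputable def bubbles [Fintype X] (P : Preo X) : Finset (Finset X) :=
  Finset.univ.image (fun a => P.bubble a)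

/-- `R` is a positive sub-preorder of `P`: in any loop
`x = x₀ ≤_R x₁ ≥_P x₂ ≤_R ⋯ ≤_R x_{2k-1} ≥_P x_{2k} = x`,
every descending step `≥_P` is actually `≥_R`. -/
def PositiveSub (R P : Preo X) : Prop :=
  ∀ (k : ℕ) (x : ℕ → X), x (2 * k) = x 0 →
    (∀ i < k, R.le (x (2 * i)) (x (2 * i + 1))) →
    (∀ i < k, P.le (x (2 * i + 2)) (x (2 * i + 1))) →
    ∀ i < k, R.le (x (2 * i + 2)) (x (2 * i + 1))

end Preo

section Submod

variable {I : Type*} [Fintype I] [DecidableEq I]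

/-- A function `z : P(I) → ℝ ∪ {∞}` is submodular if
`z(S ∪ T) + z(S ∩ T) ≤ z(S) + z(T)` for all `S, T`. -/
def Submodular (z : Finset I → WithTop ℝ) : Prop :=
  ∀ S T : Finset I, z (S ∪ T) + z (S ∩ T) ≤ z S + z T

/-- The corestriction `z_{/A}` : `U ↦ z(A ∪ U) − z(A)` (meaningful when `z A ≠ ⊤`). -/
noncomputable def coRes (z : Finset I → WithTop ℝ) (A U : Finset I) : WithTop ℝ :=
  z (A ∪ U) + ((-(z A).untopD 0 : ℝ) : WithTop ℝ)

/-- The extended generalized permutahedron of `z`: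
`x_I = z(I)` and `x_A ≤ z(A)` whenever `z(A) < ∞`. -/
def EGP (z : Finset I → WithTop ℝ) : Set (I → ℝ) :=
  {x | ((∑ i, x i : ℝ) : WithTop ℝ) = z Finset.univ ∧
       ∀ A : Finset I, ((∑ i ∈ A, x i : ℝ) : WithTop ℝ) ≤ z A}

/-- `z` restricted to subsets of `C` decomposes as the product of its restrictions to `S`
and `T`, where `C = S ⊔ T`. -/
def SplitsAlong (z : Finset I → WithTop ℝ) (C S T : Finset I) : Prop :=
  Disjoint S T ∧ S ∪ T = C ∧ ∀ E ⊆ C, z E = z (E ∩ S) + z (E ∩ T)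

/-- `z` restricted to subsets of `C` is indecomposable. -/
def IndecompOn (z : Finset I → WithTop ℝ) (C : Finset I) : Prop :=
  ∀ S T : Finset I, S.Nonempty → T.Nonempty → ¬ SplitsAlong z C S T

/-- `fam` is the partition underlying a factorization of `z` into indecomposable
extended Boolean functions. -/
def IsIndecompFactorization (z : Finset I → WithTop ℝ) (fam : Finset (Finset I)) : Prop :=
  (∀ B ∈ fam, B.Nonempty) ∧
  (∀ B ∈ fam, ∀ B' ∈ fam, B ≠ B' → Disjoint B B') ∧
  fam.sup id = Finset.univ ∧
  (∀ E : Finset I, z E = ∑ B ∈ fam, z (E ∩ B)) ∧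
  ∀ B ∈ fam, IndecompOn z B

/-- A family of finite subsets of `I` forming a topology on `I`. -/
def IsTopologyFam (F : Set (Finset I)) : Prop :=
  ∅ ∈ F ∧ Finset.univ ∈ F ∧ (∀ A ∈ F, ∀ B ∈ F, A ∪ B ∈ F) ∧ ∀ A ∈ F, ∀ B ∈ F, A ∩ B ∈ F

/-- The preorder `P` is compatible with the submodular function `z`. -/
def Compatible (z : Finset I → WithTop ℝ) (P : Preo I) : Prop :=
  (∀ A : Finset I, P.IsDownset A → z A ≠ ⊤) ∧
  ∀ A B : Finset I, P.IsDownset A → P.IsDownset B → A ⊆ B →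
    ∀ C₁ C₂ : Finset I, Disjoint C₁ C₂ → C₁ ∪ C₂ = B \ A →
      (∀ x ∈ C₁, ∀ y ∈ C₂, ¬ P.le x y ∧ ¬ P.le y x) →
      ∀ U ⊆ B \ A, coRes z A U = coRes z A (U ∩ C₁) + coRes z A (U ∩ C₂)

/-- For a convex subset `C` of `P`, the function `z_C : U ↦ z(A ∪ U) − z(A)`, where
`A = (↓C) \ C` with `↓C` the down-set generated by `C`. -/
noncomputable def zConv (z : Finset I → WithTop ℝ) (P : Preo I) (C U : Finset I) :
    WithTop ℝ :=
  coRes z (P.downClosure C \ C) U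

/-- The preorder `P` conforms to the submodular function `z`: it is compatible with `z`
and every product decomposition of `z_C`, for `C` convex in `P`, comes from a
disconnected decomposition of the preorder induced on `C`. -/
def Conforms (z : Finset I → WithTop ℝ) (P : Preo I) : Prop :=
  Compatible z P ∧
  ∀ C : Finset I, P.ConvexF C →
    ∀ C₁ C₂ : Finset I, Disjoint C₁ C₂ → C₁ ∪ C₂ = C →
      (∀ U ⊆ C, zConv z P C U = zConv z P C (U ∩ C₁) + zConv z P C (U ∩ C₂)) →
      ∀ x ∈ C₁, ∀ y ∈ C₂, ¬ P.le x y ∧ ¬ P.le y x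

/-- The preorder `pre(z)` associated to `z`: `x ≤ y` iff every `A` with `z(A) < ∞`
("open set") containing `y` contains `x`. -/
def preZ (z : Finset I → WithTop ℝ) : Preo I where
  le x y := ∀ A : Finset I, z A ≠ ⊤ → y ∈ A → x ∈ A
  le_refl _ := fun _ _ h => h
  le_trans h h' := fun A hA hy => h A hA (h' A hA hy)

/-- The preorder associated (by the Alexandroff correspondence) to a family of subsets. -/
def preOfFam (F : Set (Finset I)) : Preo I where
  le x y := ∀ A ∈ F, y ∈ A → x ∈ A
  le_refl _ := fun _ _ h => h
  le_trans h h' := fun A hA hy => h A hA (h' A hA hy)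

/-- `Alin(P, z)`: the affine space cut out by `x_A = z(A)` for `A` a down-set of `P`. -/
def Alin (z : Finset I → WithTop ℝ) (P : Preo I) : Set (I → ℝ) :=
  {x | ∀ A : Finset I, P.IsDownset A → ((∑ i ∈ A, x i : ℝ) : WithTop ℝ) = z A}

/-- `AlinBu(P, z)`: the affine space cut out by `x_C = z_C(C)` for `C` a bubble of `P`. -/
def AlinBu (z : Finset I → WithTop ℝ) (P : Preo I) : Set (I → ℝ) :=
  {x | ∀ a : I, ((∑ i ∈ P.bubble a, x i : ℝ) : WithTop ℝ) = zConv z P (P.bubble a) (P.bubble a)}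

/-- `Φ_z(P)`: the (possibly empty) face of `Π(z)` cut out by the equalities `x_A = z(A)`
for `A` a down-set of `P`. -/
def Phi (z : Finset I → WithTop ℝ) (P : Preo I) : Set (I → ℝ) :=
  {x | x ∈ EGP z ∧ ∀ A : Finset I, P.IsDownset A → ((∑ i ∈ A, x i : ℝ) : WithTop ℝ) = z A}

/-- `Ψ_z(G)`: the family of sets `A` with `z(A) < ∞` on which `x_A = z(A)` for all `x ∈ G`. -/
def PsiFam (z : Finset I → WithTop ℝ) (G : Set (I → ℝ)) : Set (Finset I) :=
  {A | z A ≠ ⊤ ∧ ∀ x ∈ G, ((∑ i ∈ A, x i : ℝ) : WithTop ℝ) = z A}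

/-- `Ψ_z(G)` as a preorder. -/
def PsiPre (z : Finset I → WithTop ℝ) (G : Set (I → ℝ)) : Preo I :=
  preOfFam (PsiFam z G)

/-- `z_P = ∏_{C ∈ b(P)} z_C`: the product over all bubbles of `P`. -/
noncomputable def zP (z : Finset I → WithTop ℝ) (P : Preo I) : Finset I → WithTop ℝ :=
  fun E => ∑ C ∈ P.bubbles, zConv z P C (E ∩ C)

/-- The restriction `z|_S` of `z` to subsets of `S`. -/
def restrictFn (z : Finset I → WithTop ℝ) (S : Finset I) :
    Finset {x : I // x ∈ S} → WithTop ℝ :=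
  fun U => z (U.map (Function.Embedding.subtype fun x => x ∈ S))

/-- The corestriction `z_{/S}` of `z`, on subsets of `I ∖ S`. -/
noncomputable def coresFn (z : Finset I → WithTop ℝ) (S : Finset I) :
    Finset {x : I // x ∉ S} → WithTop ℝ :=
  fun U => z (S ∪ U.map (Function.Embedding.subtype fun x => x ∉ S)) +
    ((-(z S).untopD 0 : ℝ) : WithTop ℝ)

/-- The restriction `P|_S` of a preorder to `S`. -/
def restrictPre (P : Preo I) (S : Finset I) : Preo {x : I // x ∈ S} where
  le a b := P.le a b
  le_refl a := P.le_refl a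
  le_trans h h' := P.le_trans h h'

/-- The corestriction `P_{/S}` of a preorder, on `I ∖ S`. -/
def coresPre (P : Preo I) (S : Finset I) : Preo {x : I // x ∉ S} where
  le a b := P.le a b
  le_refl a := P.le_refl a
  le_trans h h' := P.le_trans h h'

end Submod
section AuxPreo
open scoped Classical
variable {I : Type*} [Fintype I] [DecidableEq I]
set_option linter.unusedSectionVars false
set_option linter.unusedVariables false

namespace Preo
variable (P : Preo I)

lemma downset_union {A B : Finset I} (hA : P.IsDownset A) (hB : P.IsDownset B) :
    P.IsDownset (A ∪ B) := by
  intro x y hy hle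
  rcases Finset.mem_union.mp hy with h | h
  · exact Finset.mem_union_left _ (hA h hle)
  · exact Finset.mem_union_right _ (hB h hle)

lemma downset_inter {A B : Finset I} (hA : P.IsDownset A) (hB : P.IsDownset B) :
    P.IsDownset (A ∩ B) := by
  intro x y hy hle
  rw [Finset.mem_inter] at hy ⊢
  exact ⟨hA hy.1 hle, hB hy.2 hle⟩

lemma downset_empty : P.IsDownset ∅ := by intro x y hy; simp at hy

lemma downset_univ : P.IsDownset Finset.univ := by intro x y _ _; simp

lemma mem_bubble {a x : I} : x ∈ P.bubble a ↔ P.le a x ∧ P.le x a := by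
  simp [Preo.bubble]

lemma self_mem_bubble (a : I) : a ∈ P.bubble a :=
  P.mem_bubble.mpr ⟨P.le_refl a, P.le_refl a⟩

lemma downset_principal (b : I) : P.IsDownset (Finset.univ.filter (fun x => P.le x b)) := by
  intro x y hy hle
  simp only [Finset.mem_filter, Finset.mem_univ, true_and] at hy ⊢
  exact P.le_trans hle hy

lemma convexF_bubble (a : I) : P.ConvexF (P.bubble a) := by
  intro x y w hx hy h1 h2
  rw [P.mem_bubble] at hx hy ⊢
  exact ⟨P.le_trans hx.1 h1, P.le_trans h2 hy.2⟩

lemma mem_downClosure {C : Finset I} {x : I} :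
    x ∈ P.downClosure C ↔ ∃ y ∈ C, P.le x y := by simp [Preo.downClosure]

lemma subset_downClosure (C : Finset I) : C ⊆ P.downClosure C := by
  intro x hx
  exact P.mem_downClosure.mpr ⟨x, hx, P.le_refl x⟩

lemma downset_downClosure (C : Finset I) : P.IsDownset (P.downClosure C) := by
  intro x y hy hle
  rcases P.mem_downClosure.mp hy with ⟨c, hc, hyc⟩
  exact P.mem_downClosure.mpr ⟨c, hc, P.le_trans hle hyc⟩

lemma downset_downClosure_diff {C : Finset I} (hC : P.ConvexF C) :
    P.IsDownset (P.downClosure C \ C) := by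
  intro x y hy hle
  rw [Finset.mem_sdiff] at hy ⊢
  refine ⟨P.downset_downClosure C hy.1 hle, ?_⟩
  intro hxC
  rcases P.mem_downClosure.mp hy.1 with ⟨c, hc, hyc⟩
  exact hy.2 (hC hxC hc hle hyc)

lemma downClosure_eq_union (C : Finset I) :
    P.downClosure C = (P.downClosure C \ C) ∪ C := by
  rw [Finset.sdiff_union_self_eq_union, Finset.union_eq_left.mpr (P.subset_downClosure C)]

/-- A downset either contains a bubble or is disjoint from it. -/
lemma downset_bubble_cases {D : Finset I} (hD : P.IsDownset D) (a : I) :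
    D ∩ P.bubble a = ∅ ∨ P.bubble a ⊆ D := by
  by_cases h : (D ∩ P.bubble a).Nonempty
  · right
    rcases h with ⟨d, hd⟩
    rw [Finset.mem_inter, P.mem_bubble] at hd
    intro c hc
    rw [P.mem_bubble] at hc
    exact hD hd.1 (P.le_trans hc.2 hd.2.1)
  · left; exact Finset.not_nonempty_iff_eq_empty.mp h

/-- Pick a minimal bubble of `A' \ A` over the downset `A`. -/
lemma exists_min_bubble {A A' : Finset I} (hA : P.IsDownset A) (hA' : P.IsDownset A')
    (hss : A ⊆ A') (hne : (A' \ A).Nonempty) :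
    ∃ a ∈ A' \ A, A ∩ P.bubble a = ∅ ∧ P.bubble a ⊆ A' ∧
      P.IsDownset (A ∪ P.bubble a) := by
  obtain ⟨a, ha, hmin⟩ := Finset.exists_min_image (A' \ A)
    (fun a => ((A' \ A).filter (fun b => P.le b a)).card) hne
  rw [Finset.mem_sdiff] at ha
  have key : ∀ b, b ∈ A' \ A → P.le b a → P.le a b := by
    intro b hb hba
    by_contra hab
    have hsub : (A' \ A).filter (fun c => P.le c b) ⊆ (A' \ A).filter (fun c => P.le c a) := by
      intro c hc
      rw [Finset.mem_filter] at hc ⊢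
      exact ⟨hc.1, P.le_trans hc.2 hba⟩
    have hamem : a ∈ (A' \ A).filter (fun c => P.le c a) :=
      Finset.mem_filter.mpr ⟨Finset.mem_sdiff.mpr ha, P.le_refl a⟩
    have hanmem : a ∉ (A' \ A).filter (fun c => P.le c b) := by
      intro h; exact hab (Finset.mem_filter.mp h).2
    have := Finset.card_lt_card (Finset.ssubset_iff_of_subset hsub |>.mpr ⟨a, hamem, hanmem⟩)
    have := hmin b hb
    omega
  have hdisj : A ∩ P.bubble a = ∅ := by
    rw [Finset.eq_empty_iff_forall_notMem]
    intro c hc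
    rw [Finset.mem_inter, P.mem_bubble] at hc
    exact ha.2 (hA hc.1 hc.2.1)
  have hsubA' : P.bubble a ⊆ A' := by
    intro c hc
    rw [P.mem_bubble] at hc
    exact hA' ha.1 hc.2
  refine ⟨a, Finset.mem_sdiff.mpr ha, hdisj, hsubA', ?_⟩
  intro x y hy hle
  rcases Finset.mem_union.mp hy with h | h
  · exact Finset.mem_union_left _ (hA h hle)
  · rw [P.mem_bubble] at h
    have hxa : P.le x a := P.le_trans hle h.2
    by_cases hxA : x ∈ A
    · exact Finset.mem_union_left _ hxA
    · have hxA' : x ∈ A' := hA' ha.1 hxa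
      have := key x (Finset.mem_sdiff.mpr ⟨hxA', hxA⟩) hxa
      exact Finset.mem_union_right _ (P.mem_bubble.mpr ⟨this, hxa⟩)

end Preo
end AuxPreo
section Aux
open scoped Classical
variable {I : Type*} [Fintype I] [DecidableEq I]

set_option linter.unusedSectionVars false
set_option linter.unusedVariables false

/-- Sandwich lemma in `WithTop ℝ`. -/
lemma sandwich2 {ra rb : ℝ} {a' b' : WithTop ℝ} (h1 : (ra : WithTop ℝ) ≤ a')
    (h2 : (rb : WithTop ℝ) ≤ b') (h : a' + b' ≤ (ra : WithTop ℝ) + (rb : WithTop ℝ)) :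
    a' = ↑ra ∧ b' = ↑rb := by
  have ha : a' ≠ ⊤ := by
    rintro rfl
    rw [top_add, ← WithTop.coe_add] at h
    exact (WithTop.not_top_le_coe _) h
  have hb : b' ≠ ⊤ := by
    rintro rfl
    rw [add_top, ← WithTop.coe_add] at h
    exact (WithTop.not_top_le_coe _) h
  lift a' to ℝ using ha
  lift b' to ℝ using hb
  rw [← WithTop.coe_add, ← WithTop.coe_add, WithTop.coe_le_coe] at h
  rw [WithTop.coe_le_coe] at h1 h2
  constructor <;> rw [WithTop.coe_inj] <;> linarith

lemma sum_restrict_support (x : I → ℝ) (C A : Finset I) (h : ∀ i, i ∉ C → x i = 0) :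
    ∑ i ∈ A, x i = ∑ i ∈ A ∩ C, x i := by
  rw [← Finset.sum_inter_add_sum_sdiff A C x]
  have : ∑ i ∈ A \ C, x i = 0 :=
    Finset.sum_eq_zero (fun i hi => h i (Finset.mem_sdiff.mp hi).2)
  rw [this, add_zero]

variable {z : Finset I → WithTop ℝ}

lemma coe_of_ne_top {u : WithTop ℝ} (h : u ≠ ⊤) : ∃ a : ℝ, u = ↑a := by
  rcases WithTop.ne_top_iff_exists.mp h with ⟨a, ha⟩; exact ⟨a, ha.symm⟩

/-- The uncrossing lemma: if `A`, `A∪C₁`, `A∪C₂`, `A∪C₁∪C₂` are all tight at a point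
`g` of `EGP z`, then the corestriction of `z` at `A` splits along `C₁, C₂`. -/
lemma star_split (hsub : Submodular z) {g : I → ℝ}
    {A C₁ C₂ : Finset I} (h12 : Disjoint C₁ C₂) (hA1 : Disjoint A C₁) (hA2 : Disjoint A C₂)
    (t0 : ((∑ i ∈ A, g i : ℝ) : WithTop ℝ) = z A)
    (t1 : ((∑ i ∈ A ∪ C₁, g i : ℝ) : WithTop ℝ) = z (A ∪ C₁))
    (t2 : ((∑ i ∈ A ∪ C₂, g i : ℝ) : WithTop ℝ) = z (A ∪ C₂))
    (t3 : ((∑ i ∈ A ∪ C₁ ∪ C₂, g i : ℝ) : WithTop ℝ) = z (A ∪ C₁ ∪ C₂)) :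
    ∀ U ⊆ C₁ ∪ C₂, coRes z A U = coRes z A (U ∩ C₁) + coRes z A (U ∩ C₂) := by
  have d12 : ∀ j, j ∈ C₁ → j ∈ C₂ → False := fun j h1 h2 => Finset.disjoint_left.mp h12 h1 h2
  have dA1 : ∀ j, j ∈ A → j ∈ C₁ → False := fun j h1 h2 => Finset.disjoint_left.mp hA1 h1 h2
  have dA2 : ∀ j, j ∈ A → j ∈ C₂ → False := fun j h1 h2 => Finset.disjoint_left.mp hA2 h1 h2
  intro U hU
  have hUsub : ∀ x ∈ U, x ∈ C₁ ∨ x ∈ C₂ := by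
    intro x hx; exact Finset.mem_union.mp (hU hx)
  have e1 : (A ∪ (U ∩ C₁)) ∪ (A ∪ (U ∩ C₂)) = A ∪ U := by
    ext j
    have h1 := fun a => hUsub j a
    simp only [Finset.mem_union, Finset.mem_inter]
    tauto
  have e2 : (A ∪ (U ∩ C₁)) ∩ (A ∪ (U ∩ C₂)) = A := by
    ext j
    have h1 := fun a b => d12 j a b
    simp only [Finset.mem_union, Finset.mem_inter]
    tauto
  have eU2 : (A ∪ U) ∪ (A ∪ C₂) = A ∪ (U ∩ C₁) ∪ C₂ := by
    ext j
    have h1 := fun a => hUsub j a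
    simp only [Finset.mem_union, Finset.mem_inter]
    tauto
  have eI2 : (A ∪ U) ∩ (A ∪ C₂) = A ∪ (U ∩ C₂) := by
    ext j
    have h1 := fun a => hUsub j a
    simp only [Finset.mem_union, Finset.mem_inter]
    tauto
  have eU1 : (A ∪ U) ∪ (A ∪ C₁) = A ∪ C₁ ∪ (U ∩ C₂) := by
    ext j
    have h1 := fun a => hUsub j a
    simp only [Finset.mem_union, Finset.mem_inter]
    tauto
  have eI1 : (A ∪ U) ∩ (A ∪ C₁) = A ∪ (U ∩ C₁) := by
    ext j
    have h1 := fun a => hUsub j a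
    simp only [Finset.mem_union, Finset.mem_inter]
    tauto
  have eUg : (A ∪ (U ∩ C₁) ∪ C₂) ∪ (A ∪ C₁) = A ∪ C₁ ∪ C₂ := by
    ext j
    have h1 := fun a => hUsub j a
    simp only [Finset.mem_union, Finset.mem_inter]
    tauto
  have eIg : (A ∪ (U ∩ C₁) ∪ C₂) ∩ (A ∪ C₁) = A ∪ (U ∩ C₁) := by
    ext j
    have h1 := fun a b => d12 j a b
    have h2 := fun a b => dA2 j a b
    simp only [Finset.mem_union, Finset.mem_inter]
    tauto
  have hrA : z A ≠ ⊤ := by rw [← t0]; exact WithTop.coe_ne_top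
  set r : ℝ := ∑ i ∈ A, g i with hr
  have hzA : z A = ↑r := t0.symm
  have huntop : (z A).untopD 0 = r := by rw [hzA, WithTop.untopD_coe]
  have hrev : z (A ∪ U) + z A ≤ z (A ∪ (U ∩ C₁)) + z (A ∪ (U ∩ C₂)) := by
    have := hsub (A ∪ (U ∩ C₁)) (A ∪ (U ∩ C₂))
    rwa [e1, e2] at this
  by_cases htop : z (A ∪ U) = ⊤
  · have hor : z (A ∪ (U ∩ C₁)) = ⊤ ∨ z (A ∪ (U ∩ C₂)) = ⊤ := by
      by_contra hcon
      push_neg at hcon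
      have hne : z (A ∪ (U ∩ C₁)) + z (A ∪ (U ∩ C₂)) ≠ ⊤ :=
        WithTop.add_ne_top.mpr hcon
      rw [htop, top_add] at hrev
      exact hne (top_le_iff.mp hrev)
    have hL : coRes z A U = ⊤ := by rw [coRes, htop, top_add]
    rw [hL]
    rcases hor with h | h <;> simp [coRes, h]
  · -- finite case
    obtain ⟨α, hα⟩ := coe_of_ne_top htop
    have hc1 : z (A ∪ C₁) = ↑(∑ i ∈ A ∪ C₁, g i) := t1.symm
    have hc2 : z (A ∪ C₂) = ↑(∑ i ∈ A ∪ C₂, g i) := t2.symm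
    have hbb : z (A ∪ C₁ ∪ C₂) = ↑(∑ i ∈ A ∪ C₁ ∪ C₂, g i) := t3.symm
    set c1 : ℝ := ∑ i ∈ A ∪ C₁, g i
    set c2 : ℝ := ∑ i ∈ A ∪ C₂, g i
    set bb : ℝ := ∑ i ∈ A ∪ C₁ ∪ C₂, g i
    have hsum : c1 + c2 = r + bb := by
      have h1 : c1 = r + ∑ i ∈ C₁, g i := Finset.sum_union hA1
      have h2 : c2 = r + ∑ i ∈ C₂, g i := Finset.sum_union hA2
      have h3 : bb = c1 + ∑ i ∈ C₂, g i := by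
        have hd : Disjoint (A ∪ C₁) C₂ := by
          rw [Finset.disjoint_union_left]; exact ⟨hA2, h12⟩
        exact Finset.sum_union hd
      rw [h2, h3, h1]; ring
    have fin1 : z (A ∪ (U ∩ C₁)) ≠ ⊤ := by
      have hsm := hsub (A ∪ U) (A ∪ C₁)
      rw [eU1, eI1, hα, hc1, ← WithTop.coe_add] at hsm
      intro h
      rw [h, add_top] at hsm
      exact WithTop.not_top_le_coe _ hsm
    have fin2 : z (A ∪ (U ∩ C₂)) ≠ ⊤ ∧ z (A ∪ (U ∩ C₁) ∪ C₂) ≠ ⊤ := by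
      have hsm := hsub (A ∪ U) (A ∪ C₂)
      rw [eU2, eI2, hα, hc2, ← WithTop.coe_add] at hsm
      have hne : z (A ∪ (U ∩ C₁) ∪ C₂) + z (A ∪ (U ∩ C₂)) ≠ ⊤ := by
        intro h
        rw [h] at hsm
        exact WithTop.not_top_le_coe _ hsm
      exact ⟨(WithTop.add_ne_top.mp hne).2, (WithTop.add_ne_top.mp hne).1⟩
    obtain ⟨β₁, hβ₁⟩ := coe_of_ne_top fin1
    obtain ⟨β₂, hβ₂⟩ := coe_of_ne_top fin2.1
    obtain ⟨γ, hγ⟩ := coe_of_ne_top fin2.2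
    have ineq1 : γ + β₂ ≤ α + c2 := by
      have hsm := hsub (A ∪ U) (A ∪ C₂)
      rw [eU2, eI2, hα, hc2, hγ, hβ₂, ← WithTop.coe_add, ← WithTop.coe_add,
        WithTop.coe_le_coe] at hsm
      exact hsm
    have ineq2 : bb + β₁ ≤ γ + c1 := by
      have hsm := hsub (A ∪ (U ∩ C₁) ∪ C₂) (A ∪ C₁)
      rw [eUg, eIg, hbb, hc1, hγ, hβ₁, ← WithTop.coe_add, ← WithTop.coe_add,
        WithTop.coe_le_coe] at hsm
      exact hsm
    have hrevr : α + r ≤ β₁ + β₂ := by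
      rw [hα, hzA, hβ₁, hβ₂, ← WithTop.coe_add, ← WithTop.coe_add, WithTop.coe_le_coe] at hrev
      exact hrev
    rw [coRes, coRes, coRes, huntop, hα, hβ₁, hβ₂, ← WithTop.coe_add, ← WithTop.coe_add,
      ← WithTop.coe_add, ← WithTop.coe_add, WithTop.coe_inj]
    linarith

end Aux
section Aux2
open scoped Classical
variable {I : Type*} [Fintype I] [DecidableEq I]

set_option linter.unusedSectionVars false
set_option linter.unusedVariables false

variable {z : Finset I → WithTop ℝ}

/-- Modularity of a compatible submodular function on the lattice of downsets. -/
lemma modular_downsets {P : Preo I} (hc : Compatible z P) {D E : Finset I}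
    (hD : P.IsDownset D) (hE : P.IsDownset E) :
    z (D ∪ E) + z (D ∩ E) = z D + z E := by
  have hinc : ∀ x ∈ D \ E, ∀ y ∈ E \ D, ¬ P.le x y ∧ ¬ P.le y x := by
    intro x hx y hy
    rw [Finset.mem_sdiff] at hx hy
    constructor
    · intro h; exact hx.2 (hE hy.1 h)
    · intro h; exact hy.2 (hD hx.1 h)
  have hdisj : Disjoint (D \ E) (E \ D) := by
    rw [Finset.disjoint_left]
    intro a ha hb
    rw [Finset.mem_sdiff] at ha hb
    exact ha.2 hb.1
  have hun : (D \ E) ∪ (E \ D) = (D ∪ E) \ (D ∩ E) := by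
    ext j; simp only [Finset.mem_sdiff, Finset.mem_union, Finset.mem_inter]; tauto
  have h := hc.2 (D ∩ E) (D ∪ E) (P.downset_inter hD hE) (P.downset_union hD hE)
    Finset.inter_subset_union (D \ E) (E \ D) hdisj hun hinc
    ((D ∪ E) \ (D ∩ E)) subset_rfl
  have e0 : (D ∩ E) ∪ ((D ∪ E) \ (D ∩ E)) = D ∪ E := by
    ext j; simp only [Finset.mem_sdiff, Finset.mem_union, Finset.mem_inter]; tauto
  have e1 : ((D ∪ E) \ (D ∩ E)) ∩ (D \ E) = D \ E := by
    ext j; simp only [Finset.mem_sdiff, Finset.mem_union, Finset.mem_inter]; tauto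
  have e2 : ((D ∪ E) \ (D ∩ E)) ∩ (E \ D) = E \ D := by
    ext j; simp only [Finset.mem_sdiff, Finset.mem_union, Finset.mem_inter]; tauto
  have e3 : (D ∩ E) ∪ (D \ E) = D := by
    ext j; simp only [Finset.mem_sdiff, Finset.mem_union, Finset.mem_inter]; tauto
  have e4 : (D ∩ E) ∪ (E \ D) = E := by
    ext j; simp only [Finset.mem_sdiff, Finset.mem_union, Finset.mem_inter]; tauto
  rw [coRes, coRes, coRes, e0, e1, e2, e3, e4] at h
  obtain ⟨dd, hdd⟩ := coe_of_ne_top (hc.1 D hD)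
  obtain ⟨ee, hee⟩ := coe_of_ne_top (hc.1 E hE)
  obtain ⟨uu, huu⟩ := coe_of_ne_top (hc.1 (D ∪ E) (P.downset_union hD hE))
  obtain ⟨ii, hii⟩ := coe_of_ne_top (hc.1 (D ∩ E) (P.downset_inter hD hE))
  rw [hdd, hee, huu, hii, WithTop.untopD_coe, ← WithTop.coe_add, ← WithTop.coe_add,
    ← WithTop.coe_add, ← WithTop.coe_add, WithTop.coe_inj] at h
  rw [hdd, hee, huu, hii, ← WithTop.coe_add, ← WithTop.coe_add, WithTop.coe_inj]
  linarith

/-- Membership in the base polytope of `w` on the ground set `C`. -/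
def IsBase (w : Finset I → WithTop ℝ) (C : Finset I) (y : I → ℝ) : Prop :=
  (∀ i, i ∉ C → y i = 0) ∧ (∀ U ⊆ C, ((∑ i ∈ U, y i : ℝ) : WithTop ℝ) ≤ w U) ∧
  ((∑ i ∈ C, y i : ℝ) : WithTop ℝ) = w C

section Base
variable (w : Finset I → WithTop ℝ) (C : Finset I)

/-- Feasibility for the (extended) submodular polyhedron. -/
def FeasB (y : I → ℝ) : Prop :=
  (∀ i, i ∉ C → y i = 0) ∧ (∀ U ⊆ C, ((∑ i ∈ U, y i : ℝ) : WithTop ℝ) ≤ w U)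

/-- A tight set. -/
def TightB (y : I → ℝ) (T : Finset I) : Prop :=
  T ⊆ C ∧ w T ≠ ⊤ ∧ ((∑ i ∈ T, y i : ℝ) : WithTop ℝ) = w T

variable {w C}
variable (hw : ∀ S T : Finset I, S ⊆ C → T ⊆ C → w (S ∪ T) + w (S ∩ T) ≤ w S + w T)
  (hw0 : w ∅ = 0) (hwC : w C ≠ ⊤)

include hw0 hwC in
lemma exists_feasB : ∃ y, FeasB w C y := by
  set V : Finset ℝ := (C.powerset.filter (fun U => w U ≠ ⊤)).image (fun U => -((w U).untopD 0))
  have hVne : V.Nonempty := by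
    refine ⟨-((w C).untopD 0), Finset.mem_image.mpr ⟨C, ?_, rfl⟩⟩
    exact Finset.mem_filter.mpr ⟨Finset.mem_powerset.mpr subset_rfl, hwC⟩
  set M : ℝ := max (V.max' hVne) 0
  have hM0 : 0 ≤ M := le_max_right _ _
  have hMb : ∀ U ⊆ C, w U ≠ ⊤ → -((w U).untopD 0) ≤ M := by
    intro U hU hUt
    refine le_trans (Finset.le_max' V _ ?_) (le_max_left _ _)
    exact Finset.mem_image.mpr ⟨U, Finset.mem_filter.mpr ⟨Finset.mem_powerset.mpr hU, hUt⟩, rfl⟩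
  refine ⟨fun i => if i ∈ C then -M else 0, fun i hi => if_neg hi, ?_⟩
  intro U hU
  by_cases hUt : w U = ⊤
  · rw [hUt]; exact le_top
  · obtain ⟨u, hu⟩ := coe_of_ne_top hUt
    have hsum : ∑ i ∈ U, (if i ∈ C then -M else 0) = U.card • (-M) := by
      rw [← Finset.sum_const]
      exact Finset.sum_congr rfl (fun i hi => if_pos (hU hi))
    rw [hsum, hu, WithTop.coe_le_coe]
    rcases Finset.eq_empty_or_nonempty U with rfl | hUne
    · simp only [Finset.card_empty, zero_smul]
      have : w ∅ = (0 : WithTop ℝ) := hw0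
      rw [this] at hu
      have : u = 0 := by
        rw [← WithTop.coe_zero, WithTop.coe_inj] at hu
        exact hu.symm
      simp [this]
    · have hcard : 1 ≤ (U.card : ℝ) := by
        have := Finset.card_pos.mpr hUne
        exact_mod_cast this
      have hMu : -u ≤ M := by
        have := hMb U hU hUt
        rwa [hu, WithTop.untopD_coe] at this
      rw [nsmul_eq_mul]
      nlinarith

include hw in
lemma tightB_union {y : I → ℝ} (hy : FeasB w C y) {T T' : Finset I}
    (hT : TightB w C y T) (hT' : TightB w C y T') :
    TightB w C y (T ∪ T') ∧ TightB w C y (T ∩ T') := by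
  obtain ⟨hTc, hTt, hTe⟩ := hT
  obtain ⟨hTc', hTt', hTe'⟩ := hT'
  have hUc : T ∪ T' ⊆ C := Finset.union_subset hTc hTc'
  have hIc : T ∩ T' ⊆ C := (Finset.inter_subset_left).trans hTc
  have hsm := hw T T' hTc hTc'
  rw [← hTe, ← hTe', ← WithTop.coe_add] at hsm
  have hfU := hy.2 (T ∪ T') hUc
  have hfI := hy.2 (T ∩ T') hIc
  have hadd : (∑ i ∈ T, y i) + (∑ i ∈ T', y i) = (∑ i ∈ T ∪ T', y i) + (∑ i ∈ T ∩ T', y i) :=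
    (Finset.sum_union_inter).symm
  rw [hadd] at hsm
  have := sandwich2 hfU hfI (by rw [← WithTop.coe_add]; exact hsm)
  refine ⟨⟨hUc, ?_, this.1.symm⟩, ⟨hIc, ?_, this.2.symm⟩⟩
  · rw [this.1]; exact WithTop.coe_ne_top
  · rw [this.2]; exact WithTop.coe_ne_top

include hw hw0 hwC in
lemma pushup : ∀ S : Finset I, S ⊆ C →
    ∃ y, FeasB w C y ∧ ∀ i ∈ S, ∃ T, TightB w C y T ∧ i ∈ T := by
  intro S
  induction S using Finset.induction_on with
  | empty =>
    intro _
    obtain ⟨y, hy⟩ := exists_feasB hw0 hwC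
    exact ⟨y, hy, fun i hi => absurd hi (Finset.notMem_empty i)⟩
  | @insert a S ha IH =>
    intro hins
    have hSc : S ⊆ C := fun i hi => hins (Finset.mem_insert_of_mem hi)
    have haC : a ∈ C := hins (Finset.mem_insert_self a S)
    obtain ⟨y, hy, hty⟩ := IH hSc
    by_cases hex : ∃ T, TightB w C y T ∧ a ∈ T
    · refine ⟨y, hy, ?_⟩
      intro i hi
      rcases Finset.mem_insert.mp hi with rfl | hi
      · exact hex
      · exact hty i hi
    · -- push up coordinate a
      set 𝒰 : Finset (Finset I) := C.powerset.filter (fun U => a ∈ U ∧ w U ≠ ⊤) with h𝒰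
      have h𝒰ne : 𝒰.Nonempty :=
        ⟨C, Finset.mem_filter.mpr ⟨Finset.mem_powerset.mpr subset_rfl, haC, hwC⟩⟩
      set V : Finset ℝ := 𝒰.image (fun U => (w U).untopD 0 - ∑ i ∈ U, y i) with hV
      have hVne : V.Nonempty := h𝒰ne.image _
      set δ : ℝ := V.min' hVne with hδ
      obtain ⟨U₀, hU₀mem, hU₀⟩ := Finset.mem_image.mp (V.min'_mem hVne)
      rw [Finset.mem_filter, Finset.mem_powerset] at hU₀mem
      set y' : I → ℝ := Function.update y a (y a + δ) with hy'
      have hsum' : ∀ U : Finset I, (∑ i ∈ U, y' i) =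
          (∑ i ∈ U, y i) + (if a ∈ U then δ else 0) := by
        intro U
        by_cases haU : a ∈ U
        · rw [if_pos haU, hy']
          rw [Finset.sum_update_of_mem haU]
          have : ∑ i ∈ U, y i = y a + ∑ i ∈ U \ {a}, y i := by
            rw [Finset.sum_eq_add_sum_sdiff_singleton_of_mem haU]
          rw [this]; ring
        · rw [if_neg haU, add_zero, hy']
          exact Finset.sum_congr rfl (fun i hi => Function.update_of_ne (by rintro rfl; exact haU hi) _ _)
      have hδle : ∀ U ∈ 𝒰, δ ≤ (w U).untopD 0 - ∑ i ∈ U, y i := by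
        intro U hU
        exact Finset.min'_le V _ (Finset.mem_image.mpr ⟨U, hU, rfl⟩)
      have hfeas' : FeasB w C y' := by
        refine ⟨?_, ?_⟩
        · intro i hi
          rw [hy', Function.update_of_ne (by rintro rfl; exact hi haC)]
          exact hy.1 i hi
        · intro U hU
          by_cases hUt : w U = ⊤
          · rw [hUt]; exact le_top
          · obtain ⟨u, hu⟩ := coe_of_ne_top hUt
            by_cases haU : a ∈ U
            · have hUme : U ∈ 𝒰 :=
                Finset.mem_filter.mpr ⟨Finset.mem_powerset.mpr hU, haU, hUt⟩
              have := hδle U hUme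
              rw [hu, WithTop.untopD_coe] at this
              rw [hsum' U, if_pos haU, hu, WithTop.coe_le_coe]
              linarith
            · rw [hsum' U, if_neg haU, add_zero]
              exact hy.2 U hU
      have htight' : ∀ T, TightB w C y T → a ∉ T → TightB w C y' T := by
        intro T hT haT
        refine ⟨hT.1, hT.2.1, ?_⟩
        rw [hsum' T, if_neg haT, add_zero]
        exact hT.2.2
      have hU₀tight : TightB w C y' U₀ := by
        refine ⟨hU₀mem.1, hU₀mem.2.2, ?_⟩
        rw [hsum' U₀, if_pos hU₀mem.2.1]
        obtain ⟨u, hu⟩ := coe_of_ne_top hU₀mem.2.2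
        rw [hu, WithTop.untopD_coe] at hU₀
        rw [hu, WithTop.coe_inj]
        linarith
      refine ⟨y', hfeas', ?_⟩
      intro i hi
      rcases Finset.mem_insert.mp hi with rfl | hi
      · exact ⟨U₀, hU₀tight, hU₀mem.2.1⟩
      · obtain ⟨T, hT, hiT⟩ := hty i hi
        have haT : a ∉ T := by
          intro haT
          exact hex ⟨T, hT, haT⟩
        exact ⟨T, htight' T hT haT, hiT⟩

include hw hw0 hwC in
/-- The base polytope of a submodular function with finite total value is nonempty. -/
lemma exists_base : ∃ y, IsBase w C y := by
  obtain ⟨y, hy, hty⟩ := pushup hw hw0 hwC C subset_rfl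
  -- every subset of C is contained in a tight set
  have cover : ∀ s : Finset I, s ⊆ C → ∃ T, TightB w C y T ∧ s ⊆ T := by
    intro s
    induction s using Finset.induction_on with
    | empty =>
      intro _
      refine ⟨∅, ⟨Finset.empty_subset C, ?_, ?_⟩, Finset.empty_subset _⟩
      · rw [hw0, ← WithTop.coe_zero]; exact WithTop.coe_ne_top
      · rw [Finset.sum_empty, hw0, WithTop.coe_zero]
    | @insert a s ha IH =>
      intro hins
      have hsC : s ⊆ C := fun i hi => hins (Finset.mem_insert_of_mem hi)
      have haC : a ∈ C := hins (Finset.mem_insert_self a s)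
      obtain ⟨T, hT, hsT⟩ := IH hsC
      obtain ⟨T', hT', haT'⟩ := hty a haC
      refine ⟨T ∪ T', (tightB_union hw hy hT hT').1, ?_⟩
      intro i hi
      rcases Finset.mem_insert.mp hi with rfl | hi
      · exact Finset.mem_union_right _ haT'
      · exact Finset.mem_union_left _ (hsT hi)
  obtain ⟨T, hT, hCT⟩ := cover C subset_rfl
  have : T = C := Finset.Subset.antisymm hT.1 hCT
  exact ⟨y, hy.1, hy.2, by rw [← this]; exact hT.2.2⟩

end Base
end Aux2
section Aux3
open scoped Classical
variable {I : Type*} [Fintype I] [DecidableEq I]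
set_option linter.unusedSectionVars false
set_option linter.unusedVariables false

variable {w : Finset I → WithTop ℝ} {C : Finset I}
variable (hw : ∀ S T : Finset I, S ⊆ C → T ⊆ C → w (S ∪ T) + w (S ∩ T) ≤ w S + w T)
  (hw0 : w ∅ = 0) (hwC : w C ≠ ⊤)

include hw hw0 in
/-- Separation: if for each `s` in `s'` there is a tight set containing `i` avoiding `s`,
then there is a tight set containing `i` avoiding all of `s'`. -/
lemma tight_avoid {y : I → ℝ} (hy : FeasB w C y) (hbase : TightB w C y C) {i : I}
    (hi : i ∈ C) :
    ∀ s' : Finset I, (∀ s ∈ s', ∃ T, TightB w C y T ∧ i ∈ T ∧ s ∉ T) →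
      ∃ T, TightB w C y T ∧ i ∈ T ∧ ∀ s ∈ s', s ∉ T := by
  intro s'
  induction s' using Finset.induction_on with
  | empty => intro _; exact ⟨C, hbase, hi, fun s hs => absurd hs (Finset.notMem_empty s)⟩
  | @insert a s ha IH =>
    intro hall
    obtain ⟨T, hT, hiT, havoid⟩ := IH (fun s hs => hall s (Finset.mem_insert_of_mem hs))
    obtain ⟨T', hT', hiT', haT'⟩ := hall a (Finset.mem_insert_self a s)
    refine ⟨T ∩ T', (tightB_union hw hy hT hT').2, Finset.mem_inter.mpr ⟨hiT, hiT'⟩, ?_⟩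
    intro x hx hmem
    rw [Finset.mem_inter] at hmem
    rcases Finset.mem_insert.mp hx with rfl | hx
    · exact haT' hmem.2
    · exact havoid x hx hmem.1

include hw hw0 in
/-- Covering: a union of tight sets covering `s` inside `S`. -/
lemma tight_cover {y : I → ℝ} (hy : FeasB w C y) {S : Finset I} :
    ∀ s : Finset I, s ⊆ S → (∀ i ∈ s, ∃ T, TightB w C y T ∧ i ∈ T ∧ T ⊆ S) →
      ∃ T, TightB w C y T ∧ s ⊆ T ∧ T ⊆ S := by
  intro s
  induction s using Finset.induction_on with
  | empty =>
    intro _ _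
    refine ⟨∅, ⟨Finset.empty_subset C, ?_, ?_⟩, subset_rfl, Finset.empty_subset S⟩
    · rw [hw0, ← WithTop.coe_zero]; exact WithTop.coe_ne_top
    · rw [Finset.sum_empty, hw0, WithTop.coe_zero]
  | @insert a s ha IH =>
    intro hins hall
    obtain ⟨T, hT, hsT, hTS⟩ := IH (fun i hi => hins (Finset.mem_insert_of_mem hi))
      (fun i hi => hall i (Finset.mem_insert_of_mem hi))
    obtain ⟨T', hT', haT', hT'S⟩ := hall a (Finset.mem_insert_self a s)
    refine ⟨T ∪ T', (tightB_union hw hy hT hT').1, ?_, Finset.union_subset hTS hT'S⟩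
    intro x hx
    rcases Finset.mem_insert.mp hx with rfl | hx
    · exact Finset.mem_union_right _ haT'
    · exact Finset.mem_union_left _ (hsT hx)

include hw in
/-- The exchange move on a base. -/
lemma base_exchange {y : I → ℝ} (hy : IsBase w C y) {i s : I} (hi : i ∈ C) (hs : s ∈ C)
    (hne : i ≠ s) (hbl : ∀ T, TightB w C y T → i ∈ T → s ∈ T) :
    ∃ ε : ℝ, 0 < ε ∧ IsBase w C
      (fun j => if j = i then y j + ε else if j = s then y j - ε else y j) := by
  obtain ⟨hsupp, hfeas, htotal⟩ := hy
  set 𝒰 : Finset (Finset I) := C.powerset.filter (fun U => i ∈ U ∧ s ∉ U ∧ w U ≠ ⊤) with h𝒰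
  have hslack : ∀ U ∈ 𝒰, 0 < (w U).untopD 0 - ∑ j ∈ U, y j := by
    intro U hU
    rw [h𝒰, Finset.mem_filter, Finset.mem_powerset] at hU
    obtain ⟨hUC, hiU, hsU, hUt⟩ := hU
    obtain ⟨u, hu⟩ := coe_of_ne_top hUt
    have hle : (∑ j ∈ U, y j) ≤ u := by
      have := hfeas U hUC
      rwa [hu, WithTop.coe_le_coe] at this
    have hneq : (∑ j ∈ U, y j) ≠ u := by
      intro h
      have : TightB w C y U := ⟨hUC, hUt, by rw [hu, WithTop.coe_inj]; exact h⟩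
      exact hsU (hbl U this hiU)
    rw [hu, WithTop.untopD_coe]
    cases lt_or_eq_of_le hle with
    | inl h => linarith
    | inr h => exact absurd h hneq
  by_cases hUne : 𝒰.Nonempty
  · set V : Finset ℝ := 𝒰.image (fun U => (w U).untopD 0 - ∑ j ∈ U, y j) with hV
    have hVne : V.Nonempty := hUne.image _
    set ε : ℝ := V.min' hVne with hε
    have hεpos : 0 < ε := by
      obtain ⟨U₀, hU₀, hval⟩ := Finset.mem_image.mp (V.min'_mem hVne)
      rw [hε, ← hval]
      exact hslack U₀ hU₀
    have hεle : ∀ U ∈ 𝒰, ε ≤ (w U).untopD 0 - ∑ j ∈ U, y j := by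
      intro U hU
      exact Finset.min'_le V _ (Finset.mem_image.mpr ⟨U, hU, rfl⟩)
    refine ⟨ε, hεpos, ?_⟩
    set y' : I → ℝ := fun j => if j = i then y j + ε else if j = s then y j - ε else y j
    have hsum' : ∀ U : Finset I, (∑ j ∈ U, y' j) =
        (∑ j ∈ U, y j) + (if i ∈ U then ε else 0) - (if s ∈ U then ε else 0) := by
      intro U
      have : ∑ j ∈ U, y' j = ∑ j ∈ U, (y j + (if j = i then ε else 0) - (if j = s then ε else 0)) := by
        refine Finset.sum_congr rfl (fun j hj => ?_)
        by_cases h1 : j = i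
        · subst h1; simp [y', if_neg hne]
        · by_cases h2 : j = s
          · subst h2; simp [y', h1]
          · simp [y', h1, h2]
      rw [this, Finset.sum_sub_distrib, Finset.sum_add_distrib,
        Finset.sum_ite_eq' U i (fun _ => ε), Finset.sum_ite_eq' U s (fun _ => ε)]
    refine ⟨?_, ?_, ?_⟩
    · intro j hj
      have h1 : j ≠ i := fun h => hj (h ▸ hi)
      have h2 : j ≠ s := fun h => hj (h ▸ hs)
      simp only [y', if_neg h1, if_neg h2]
      exact hsupp j hj
    · intro U hU
      by_cases hUt : w U = ⊤
      · rw [hUt]; exact le_top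
      · obtain ⟨u, hu⟩ := coe_of_ne_top hUt
        rw [hsum' U, hu, WithTop.coe_le_coe]
        have hfold : (∑ j ∈ U, y j) ≤ u := by
          have := hfeas U hU; rwa [hu, WithTop.coe_le_coe] at this
        by_cases hiU : i ∈ U
        · by_cases hsU : s ∈ U
          · rw [if_pos hiU, if_pos hsU]; linarith
          · have hUm : U ∈ 𝒰 :=
              Finset.mem_filter.mpr ⟨Finset.mem_powerset.mpr hU, hiU, hsU, hUt⟩
            have := hεle U hUm
            rw [hu, WithTop.untopD_coe] at this
            rw [if_pos hiU, if_neg hsU]; linarith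
        · rw [if_neg hiU]
          by_cases hsU : s ∈ U
          · rw [if_pos hsU]; linarith
          · rw [if_neg hsU]; linarith
    · rw [hsum' C, if_pos hi, if_pos hs]
      have : (∑ j ∈ C, y j) + ε - ε = ∑ j ∈ C, y j := by ring
      rw [this, htotal]
  · -- no constraint separates i from s: ε := 1 works
    refine ⟨1, one_pos, ?_⟩
    set y' : I → ℝ := fun j => if j = i then y j + 1 else if j = s then y j - 1 else y j
    have hsum' : ∀ U : Finset I, (∑ j ∈ U, y' j) =
        (∑ j ∈ U, y j) + (if i ∈ U then (1:ℝ) else 0) - (if s ∈ U then (1:ℝ) else 0) := by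
      intro U
      have : ∑ j ∈ U, y' j = ∑ j ∈ U, (y j + (if j = i then (1:ℝ) else 0) - (if j = s then (1:ℝ) else 0)) := by
        refine Finset.sum_congr rfl (fun j hj => ?_)
        by_cases h1 : j = i
        · subst h1; simp [y', if_neg hne]
        · by_cases h2 : j = s
          · subst h2; simp [y', h1]
          · simp [y', h1, h2]
      rw [this, Finset.sum_sub_distrib, Finset.sum_add_distrib,
        Finset.sum_ite_eq' U i (fun _ => (1:ℝ)), Finset.sum_ite_eq' U s (fun _ => (1:ℝ))]
    refine ⟨?_, ?_, ?_⟩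
    · intro j hj
      have h1 : j ≠ i := fun h => hj (h ▸ hi)
      have h2 : j ≠ s := fun h => hj (h ▸ hs)
      simp only [y', if_neg h1, if_neg h2]
      exact hsupp j hj
    · intro U hU
      by_cases hUt : w U = ⊤
      · rw [hUt]; exact le_top
      · obtain ⟨u, hu⟩ := coe_of_ne_top hUt
        rw [hsum' U, hu, WithTop.coe_le_coe]
        have hfold : (∑ j ∈ U, y j) ≤ u := by
          have := hfeas U hU; rwa [hu, WithTop.coe_le_coe] at this
        by_cases hiU : i ∈ U
        · by_cases hsU : s ∈ U
          · rw [if_pos hiU, if_pos hsU]; linarith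
          · exact absurd (Finset.mem_filter.mpr
              ⟨Finset.mem_powerset.mpr hU, hiU, hsU, hUt⟩) (fun h => hUne ⟨U, h⟩)
        · rw [if_neg hiU]
          by_cases hsU : s ∈ U
          · rw [if_pos hsU]; linarith
          · rw [if_neg hsU]; linarith
    · rw [hsum' C, if_pos hi, if_pos hs]
      have : (∑ j ∈ C, y j) + 1 - 1 = ∑ j ∈ C, y j := by ring
      rw [this, htotal]

include hw hw0 hwC in
/-- If the functional `y ↦ y(S)` is constant over the base polytope, then `w`
splits along `S` and `C \ S`. -/
lemma const_split {S : Finset I} (hS : S ⊆ C)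
    (hconst : ∀ y y', IsBase w C y → IsBase w C y' →
      (∑ i ∈ S, y i) = (∑ i ∈ S, y' i)) :
    ∀ U ⊆ C, w U = w (U ∩ S) + w (U \ S) := by
  obtain ⟨y₀, hy₀⟩ := exists_base hw hw0 hwC
  set c : ℝ := ∑ i ∈ S, y₀ i with hc
  obtain ⟨wc, hwc⟩ := coe_of_ne_top hwC
  have tight_everywhere : ∀ (S₁ S₂ : Finset I), S₁ ∪ S₂ = C → Disjoint S₁ S₂ →
      (∀ y y', IsBase w C y → IsBase w C y' → (∑ i ∈ S₁, y i) = (∑ i ∈ S₁, y' i)) →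
      ∀ y, IsBase w C y → ((∑ i ∈ S₁, y i : ℝ) : WithTop ℝ) = w S₁ := by
    intro S₁ S₂ hun hdisj hcst y hy
    have hS₁C : S₁ ⊆ C := hun ▸ Finset.subset_union_left
    have hS₂C : S₂ ⊆ C := hun ▸ Finset.subset_union_right
    have hCtight : TightB w C y C := ⟨subset_rfl, hwC, hy.2.2⟩
    have hyF : FeasB w C y := ⟨hy.1, hy.2.1⟩
    by_cases hbl : ∀ i ∈ S₁, ∀ s ∈ S₂, ∃ T, TightB w C y T ∧ i ∈ T ∧ s ∉ T
    · -- blocked: build a tight set equal to S₁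
      have hTi : ∀ i ∈ S₁, ∃ T, TightB w C y T ∧ i ∈ T ∧ T ⊆ S₁ := by
        intro i hi
        obtain ⟨T, hT, hiT, havs⟩ := tight_avoid hw hw0 hyF hCtight (hS₁C hi) S₂
          (fun s hs => hbl i hi s hs)
        refine ⟨T, hT, hiT, ?_⟩
        intro x hx
        have hxC : x ∈ C := hT.1 hx
        rw [← hun, Finset.mem_union] at hxC
        rcases hxC with h | h
        · exact h
        · exact absurd hx (havs x h)
      obtain ⟨T, hT, hS₁T, hTS₁⟩ := tight_cover hw hw0 hyF S₁ subset_rfl hTi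
      have : T = S₁ := Finset.Subset.antisymm hTS₁ hS₁T
      rw [← this]
      exact hT.2.2
    · -- unblocked: an exchange contradicts constancy
      push_neg at hbl
      obtain ⟨i, hi, s, hs, hnotight⟩ := hbl
      have hblk : ∀ T, TightB w C y T → i ∈ T → s ∈ T := hnotight
      have hine : i ≠ s := by
        intro h
        exact Finset.disjoint_left.mp hdisj hi (h ▸ hs)
      obtain ⟨ε, hεpos, hy'⟩ := base_exchange hw hy (hS₁C hi) (hS₂C hs) hine hblk
      exfalso
      have := hcst y _ hy hy'
      set y' : I → ℝ := fun j => if j = i then y j + ε else if j = s then y j - ε else y j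
      have hsum : (∑ j ∈ S₁, y' j) = (∑ j ∈ S₁, y j) + ε := by
        have : ∑ j ∈ S₁, y' j = ∑ j ∈ S₁, (y j + (if j = i then ε else 0) - (if j = s then ε else 0)) := by
          refine Finset.sum_congr rfl (fun j hj => ?_)
          by_cases h1 : j = i
          · subst h1; simp [y', if_neg hine]
          · by_cases h2 : j = s
            · subst h2; simp [y', h1]
            · simp [y', h1, h2]
        rw [this, Finset.sum_sub_distrib, Finset.sum_add_distrib,
          Finset.sum_ite_eq' S₁ i (fun _ => ε), Finset.sum_ite_eq' S₁ s (fun _ => ε),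
          if_pos hi, if_neg (fun h => Finset.disjoint_left.mp hdisj h hs)]
        ring
      rw [hsum] at this
      linarith
  -- apply to S and C \ S
  have hSdisj : Disjoint S (C \ S) := Finset.disjoint_sdiff
  have hSun : S ∪ (C \ S) = C := by
    ext j; simp only [Finset.mem_union, Finset.mem_sdiff]
    constructor
    · rintro (h | ⟨h, _⟩)
      · exact hS h
      · exact h
    · intro h; by_cases hjS : j ∈ S <;> tauto
  have hStight : ∀ y, IsBase w C y → ((∑ i ∈ S, y i : ℝ) : WithTop ℝ) = w S :=
    tight_everywhere S (C \ S) hSun hSdisj hconst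
  have hconst' : ∀ y y', IsBase w C y → IsBase w C y' →
      (∑ i ∈ C \ S, y i) = (∑ i ∈ C \ S, y' i) := by
    intro y y' hy hy'
    have h1 : (∑ i ∈ S, y i) + (∑ i ∈ C \ S, y i) = ∑ i ∈ C, y i := by
      rw [← Finset.sum_union hSdisj, hSun]
    have h2 : (∑ i ∈ S, y' i) + (∑ i ∈ C \ S, y' i) = ∑ i ∈ C, y' i := by
      rw [← Finset.sum_union hSdisj, hSun]
    have h3 : (∑ i ∈ C, y i) = wc := by
      have := hy.2.2; rw [hwc, WithTop.coe_inj] at this; exact this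
    have h4 : (∑ i ∈ C, y' i) = wc := by
      have := hy'.2.2; rw [hwc, WithTop.coe_inj] at this; exact this
    have h5 := hconst y y' hy hy'
    linarith
  have hCStight : ∀ y, IsBase w C y → ((∑ i ∈ C \ S, y i : ℝ) : WithTop ℝ) = w (C \ S) := by
    have hun' : (C \ S) ∪ S = C := by rw [Finset.union_comm]; exact hSun
    have hdj : Disjoint (C \ S) S :=
      Finset.disjoint_left.mpr (fun a ha hb => (Finset.mem_sdiff.mp ha).2 hb)
    exact tight_everywhere (C \ S) S hun' hdj hconst'
  -- values
  have hwS : w S = ↑c := (hStight y₀ hy₀).symm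
  have hwCS : w (C \ S) = ↑(wc - c) := by
    have := (hCStight y₀ hy₀).symm
    have h1 : (∑ i ∈ S, y₀ i) + (∑ i ∈ C \ S, y₀ i) = ∑ i ∈ C, y₀ i := by
      rw [← Finset.sum_union hSdisj, hSun]
    have h3 : (∑ i ∈ C, y₀ i) = wc := by
      have := hy₀.2.2; rw [hwc, WithTop.coe_inj] at this; exact this
    have : w (C \ S) = ↑(∑ i ∈ C \ S, y₀ i) := this
    rw [this]
    congr 1
    linarith
  -- splitting
  intro U hU
  have eUn : (U ∩ S) ∪ (U \ S) = U := by
    ext j; simp only [Finset.mem_union, Finset.mem_inter, Finset.mem_sdiff]; tauto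
  have eIn : (U ∩ S) ∩ (U \ S) = ∅ := by
    ext j; simp only [Finset.mem_inter, Finset.mem_sdiff, Finset.notMem_empty, iff_false]
    tauto
  have hle : w U ≤ w (U ∩ S) + w (U \ S) := by
    have := hw (U ∩ S) (U \ S) ((Finset.inter_subset_left).trans hU)
      ((Finset.sdiff_subset).trans hU)
    rw [eUn, eIn, hw0, add_zero] at this
    exact this
  have hge : w (U ∩ S) + w (U \ S) ≤ w U := by
    have hsm1 := hw U S hU hS
    by_cases hUS : w (U ∪ S) = ⊤
    · rw [hUS, top_add] at hsm1
      have : w U = ⊤ := by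
        by_contra hUt
        obtain ⟨u, hu⟩ := coe_of_ne_top hUt
        rw [hu, hwS, ← WithTop.coe_add] at hsm1
        exact WithTop.not_top_le_coe _ hsm1
      rw [this]; exact le_top
    · obtain ⟨δ, hδ⟩ := coe_of_ne_top hUS
      have hsm2 := hw (U ∪ S) (C \ S) (Finset.union_subset hU hS) Finset.sdiff_subset
      have eUn2 : (U ∪ S) ∪ (C \ S) = C := by
        ext j; simp only [Finset.mem_union, Finset.mem_sdiff]
        constructor
        · rintro ((h | h) | ⟨h, _⟩)
          · exact hU h
          · exact hS h
          · exact h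
        · intro h; by_cases hjS : j ∈ S <;> tauto
      have eIn2 : (U ∪ S) ∩ (C \ S) = U \ S := by
        ext j; simp only [Finset.mem_union, Finset.mem_inter, Finset.mem_sdiff]
        constructor
        · rintro ⟨h | h, hC, hS'⟩
          · exact ⟨h, hS'⟩
          · exact absurd h hS'
        · rintro ⟨h, h'⟩
          exact ⟨Or.inl h, hU h, h'⟩
      rw [eUn2, eIn2, hδ, hwc, hwCS, ← WithTop.coe_add] at hsm2
      have hUmS : w (U \ S) ≠ ⊤ := by
        intro h
        rw [h, add_top] at hsm2
        exact WithTop.not_top_le_coe _ hsm2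
      obtain ⟨γ, hγ⟩ := coe_of_ne_top hUmS
      rw [hγ, ← WithTop.coe_add, WithTop.coe_le_coe] at hsm2
      by_cases hUt : w U = ⊤
      · rw [hUt]; exact le_top
      · obtain ⟨α, hα⟩ := coe_of_ne_top hUt
        rw [hδ, hα, hwS, ← WithTop.coe_add] at hsm1
        have hUiS : w (U ∩ S) ≠ ⊤ := by
          intro h
          rw [h, add_top] at hsm1
          exact WithTop.not_top_le_coe _ hsm1
        obtain ⟨β, hβ⟩ := coe_of_ne_top hUiS
        rw [hβ, ← WithTop.coe_add, WithTop.coe_le_coe] at hsm1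
        rw [hα, hβ, hγ, ← WithTop.coe_add, WithTop.coe_le_coe]
        linarith
  exact le_antisymm hle hge

end Aux3
section Aux4
open scoped Classical
variable {I : Type*} [Fintype I] [DecidableEq I]
set_option linter.unusedSectionVars false
set_option linter.unusedVariables false

variable {z : Finset I → WithTop ℝ} {P : Preo I}

lemma add_neg_coe_cancel (a : WithTop ℝ) (r : ℝ) : a + ↑(-r) + (r : WithTop ℝ) = a := by
  rw [add_assoc, ← WithTop.coe_add, neg_add_cancel, WithTop.coe_zero, add_zero]

/-- Submodularity of the corestriction. -/
lemma coRes_submod (hsub : Submodular z) (A : Finset I) :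
    ∀ S T : Finset I, S ⊆ Finset.univ → T ⊆ Finset.univ →
      coRes z A (S ∪ T) + coRes z A (S ∩ T) ≤ coRes z A S + coRes z A T := by
  intro S T _ _
  have h := hsub (A ∪ S) (A ∪ T)
  have e1 : (A ∪ S) ∪ (A ∪ T) = A ∪ (S ∪ T) := by
    ext j; simp only [Finset.mem_union]; tauto
  have e2 : (A ∪ S) ∩ (A ∪ T) = A ∪ (S ∩ T) := by
    ext j; simp only [Finset.mem_union, Finset.mem_inter]; tauto
  rw [e1, e2] at h
  rw [coRes, coRes, coRes, coRes]
  calc z (A ∪ (S ∪ T)) + ↑(-(z A).untopD 0) + (z (A ∪ (S ∩ T)) + ↑(-(z A).untopD 0))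
      = z (A ∪ (S ∪ T)) + z (A ∪ (S ∩ T)) + (↑(-(z A).untopD 0) + ↑(-(z A).untopD 0)) := by
        ring_nf
        rw [add_add_add_comm]
    _ ≤ z (A ∪ S) + z (A ∪ T) + (↑(-(z A).untopD 0) + ↑(-(z A).untopD 0)) := by
        exact add_le_add_left h _
    _ = z (A ∪ S) + ↑(-(z A).untopD 0) + (z (A ∪ T) + ↑(-(z A).untopD 0)) := by
        rw [add_add_add_comm]

lemma coRes_empty {A : Finset I} (hA : z A ≠ ⊤) : coRes z A ∅ = 0 := by
  obtain ⟨r, hr⟩ := coe_of_ne_top hA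
  rw [coRes, Finset.union_empty, hr, WithTop.untopD_coe, ← WithTop.coe_add]
  norm_num

/-- A partial point on a downset `A`. -/
def GoodOn (z : Finset I → WithTop ℝ) (P : Preo I) (A : Finset I) (x : I → ℝ) : Prop :=
  (∀ i, i ∉ A → x i = 0) ∧
  (∀ E : Finset I, E ⊆ A → ((∑ i ∈ E, x i : ℝ) : WithTop ℝ) ≤ z E) ∧
  (∀ D : Finset I, P.IsDownset D → D ⊆ A → ((∑ i ∈ D, x i : ℝ) : WithTop ℝ) = z D)

lemma good_step (hsub : Submodular z) (hc : Compatible z P) {A : Finset I}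
    (hA : P.IsDownset A) {a : I} (hd : A ∩ P.bubble a = ∅)
    (hu : P.IsDownset (A ∪ P.bubble a)) {x y : I → ℝ} (hx : GoodOn z P A x)
    (hy : IsBase (coRes z A) (P.bubble a) y) :
    GoodOn z P (A ∪ P.bubble a) (x + y) := by
  set C := P.bubble a with hC
  obtain ⟨r, hr⟩ := coe_of_ne_top (hc.1 A hA)
  have huntop : (z A).untopD 0 = r := by rw [hr, WithTop.untopD_coe]
  have hysupp : ∀ i, i ∉ C → y i = 0 := hy.1
  have hxsupp : ∀ i, i ∉ A → x i = 0 := hx.1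
  refine ⟨?_, ?_, ?_⟩
  · intro i hi
    rw [Finset.mem_union] at hi
    push_neg at hi
    show x i + y i = 0
    rw [hxsupp i hi.1, hysupp i hi.2, add_zero]
  · intro E hE
    have hsplit : (∑ i ∈ E, (x + y) i) = (∑ i ∈ E ∩ A, x i) + (∑ i ∈ E ∩ C, y i) := by
      have h1 : (∑ i ∈ E, (x + y) i) = (∑ i ∈ E, x i) + (∑ i ∈ E, y i) := by
        simp [Finset.sum_add_distrib]
      rw [h1, sum_restrict_support x A E hxsupp, sum_restrict_support y C E hysupp]
    set S1 : ℝ := ∑ i ∈ E ∩ A, x i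
    set S2 : ℝ := ∑ i ∈ E ∩ C, y i
    have h2 : ((S2 : ℝ) : WithTop ℝ) + ↑r ≤ z (A ∪ (E ∩ C)) := by
      have := hy.2.1 (E ∩ C) Finset.inter_subset_right
      have h' := add_le_add_left this (↑r : WithTop ℝ)
      rwa [coRes, huntop, add_neg_coe_cancel] at h'
    have h1 : ((S1 : ℝ) : WithTop ℝ) ≤ z (A ∩ E) := by
      rw [Finset.inter_comm]
      exact hx.2.1 (E ∩ A) Finset.inter_subset_right
    have hsm := hsub A E
    have eAE : A ∪ E = A ∪ (E ∩ C) := by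
      ext j
      have : j ∈ E → j ∈ A ∨ j ∈ C := by
        intro hj; exact Finset.mem_union.mp (hE hj)
      simp only [Finset.mem_union, Finset.mem_inter]
      tauto
    rw [eAE] at hsm
    have key : ((S1 + S2 : ℝ) : WithTop ℝ) + ↑r ≤ z E + ↑r := by
      calc ((S1 + S2 : ℝ) : WithTop ℝ) + ↑r = ↑S1 + (↑S2 + ↑r) := by
            rw [WithTop.coe_add, add_assoc]
        _ ≤ z (A ∩ E) + z (A ∪ (E ∩ C)) := add_le_add h1 h2
        _ = z (A ∪ (E ∩ C)) + z (A ∩ E) := add_comm _ _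
        _ ≤ z A + z E := hsm
        _ = z E + ↑r := by rw [hr, add_comm]
    have := (WithTop.add_le_add_iff_right (WithTop.coe_ne_top (a := r))).mp key
    rwa [hsplit]
  · intro D hD hDss
    have hsplit : (∑ i ∈ D, (x + y) i) = (∑ i ∈ D ∩ A, x i) + (∑ i ∈ D ∩ C, y i) := by
      have h1 : (∑ i ∈ D, (x + y) i) = (∑ i ∈ D, x i) + (∑ i ∈ D, y i) := by
        simp [Finset.sum_add_distrib]
      rw [h1, sum_restrict_support x A D hxsupp, sum_restrict_support y C D hysupp]
    rcases P.downset_bubble_cases hD a with hcase | hcase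
    · -- D misses the bubble
      have hDA : D ⊆ A := by
        intro j hj
        rcases Finset.mem_union.mp (hDss hj) with h | h
        · exact h
        · exact absurd (Finset.mem_inter.mpr ⟨hj, h⟩)
            (by rw [hcase]; exact Finset.notMem_empty j)
      have hDC : D ∩ C = ∅ := hcase
      rw [hsplit, hDC, Finset.sum_empty, add_zero]
      have : D ∩ A = D := Finset.inter_eq_left.mpr hDA
      rw [this]
      exact hx.2.2 D hD hDA
    · -- D contains the bubble
      have hDC : D ∩ C = C := Finset.inter_eq_right.mpr hcase
      have hDA : P.IsDownset (D ∩ A) := P.downset_inter hD hA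
      have hDUA : D ∪ A = A ∪ C := by
        apply Finset.Subset.antisymm
        · intro j hj
          rcases Finset.mem_union.mp hj with h | h
          · exact hDss h
          · exact Finset.mem_union_left _ h
        · intro j hj
          rcases Finset.mem_union.mp hj with h | h
          · exact Finset.mem_union_right _ h
          · exact Finset.mem_union_left _ (hcase h)
      have hmod := modular_downsets hc hD hA
      rw [hDUA] at hmod
      obtain ⟨dd, hdd⟩ := coe_of_ne_top (hc.1 D hD)
      obtain ⟨uu, huu⟩ := coe_of_ne_top (hc.1 (A ∪ C) hu)
      obtain ⟨ii, hii⟩ := coe_of_ne_top (hc.1 (D ∩ A) hDA)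
      rw [hdd, hr, huu, hii, ← WithTop.coe_add, ← WithTop.coe_add, WithTop.coe_inj] at hmod
      have hxv : (∑ i ∈ D ∩ A, x i) = ii := by
        have := hx.2.2 (D ∩ A) hDA Finset.inter_subset_right
        rw [hii, WithTop.coe_inj] at this
        exact this
      have hyv : (∑ i ∈ D ∩ C, y i) = uu - r := by
        have := hy.2.2
        rw [coRes, huntop, Finset.union_comm] at this
        have e : C ∪ A = A ∪ C := Finset.union_comm _ _
        rw [e, huu, ← WithTop.coe_add, WithTop.coe_inj] at this
        rw [hDC]
        linarith
      rw [hsplit, hxv, hyv, hdd, WithTop.coe_inj]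
      linarith

lemma good_fillup (hsub : Submodular z) (hc : Compatible z P) {A' : Finset I}
    (hA' : P.IsDownset A') :
    ∀ n : ℕ, ∀ A : Finset I, P.IsDownset A → A ⊆ A' → (A' \ A).card ≤ n →
    ∃ u : I → ℝ, (∀ i, i ∉ A' \ A → u i = 0) ∧
      ∀ x, GoodOn z P A x → GoodOn z P A' (x + u) := by
  intro n
  induction n with
  | zero =>
    intro A hA hss hcard
    have hempty : A' \ A = ∅ := Finset.card_eq_zero.mp (Nat.le_zero.mp hcard)
    have : A' = A :=
      Finset.Subset.antisymm (Finset.sdiff_eq_empty_iff_subset.mp hempty) hss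
    subst this
    refine ⟨0, fun i _ => rfl, fun x hx => ?_⟩
    have : x + (0 : I → ℝ) = x := funext (fun i => add_zero _)
    rwa [this]
  | succ n IH =>
    intro A hA hss hcard
    rcases Finset.eq_empty_or_nonempty (A' \ A) with hempty | hne
    · have : A' = A :=
        Finset.Subset.antisymm (Finset.sdiff_eq_empty_iff_subset.mp hempty) hss
      subst this
      refine ⟨0, fun i _ => rfl, fun x hx => ?_⟩
      have : x + (0 : I → ℝ) = x := funext (fun i => add_zero _)
      rwa [this]
    · obtain ⟨a, ha, hd, hbA', hdown⟩ := P.exists_min_bubble hA hA' hss hne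
      set C := P.bubble a with hC
      obtain ⟨r, hr⟩ := coe_of_ne_top (hc.1 A hA)
      -- base point for the corestriction on the bubble
      have hw : ∀ S T : Finset I, S ⊆ C → T ⊆ C →
          coRes z A (S ∪ T) + coRes z A (S ∩ T) ≤ coRes z A S + coRes z A T :=
        fun S T _ _ => coRes_submod hsub A S T (Finset.subset_univ S) (Finset.subset_univ T)
      have hw0 : coRes z A ∅ = 0 := coRes_empty (hc.1 A hA)
      have hwC : coRes z A C ≠ ⊤ := by
        rw [coRes]
        intro h
        rcases WithTop.add_eq_top.mp h with h' | h'
        · exact (hc.1 (A ∪ C) hdown) h'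
        · exact WithTop.coe_ne_top h'
      obtain ⟨y, hy⟩ := exists_base hw hw0 hwC
      -- recurse
      have hssA : A ∪ C ⊆ A' := Finset.union_subset hss hbA'
      have hcard' : (A' \ (A ∪ C)).card ≤ n := by
        have hsub1 : A' \ (A ∪ C) ⊆ (A' \ A).erase a := by
          intro j hj
          rw [Finset.mem_sdiff, Finset.mem_union] at hj
          push_neg at hj
          rw [Finset.mem_erase, Finset.mem_sdiff]
          refine ⟨?_, hj.1, hj.2.1⟩
          intro hj'
          exact hj.2.2 (hj' ▸ P.self_mem_bubble a)
        have h1 := Finset.card_le_card hsub1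
        have h2 : ((A' \ A).erase a).card = (A' \ A).card - 1 :=
          Finset.card_erase_of_mem ha
        have h3 : 1 ≤ (A' \ A).card := Finset.card_pos.mpr ⟨a, ha⟩
        omega
      obtain ⟨u', hu'supp, hu'⟩ := IH (A ∪ C) hdown hssA hcard'
      refine ⟨y + u', ?_, ?_⟩
      · intro i hi
        rw [Finset.mem_sdiff] at hi
        push_neg at hi
        show y i + u' i = 0
        have hyi : y i = 0 := by
          apply hy.1
          intro hiC
          by_cases hiA' : i ∈ A'
          · have hiA := hi hiA'
            exact (Finset.eq_empty_iff_forall_notMem.mp hd i)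
              (Finset.mem_inter.mpr ⟨hiA, hiC⟩)
          · exact hiA' (hbA' hiC)
        have hui : u' i = 0 := by
          apply hu'supp
          rw [Finset.mem_sdiff, Finset.mem_union]
          push_neg
          intro hiA'
          exact Or.inl (hi hiA')
        rw [hyi, hui, add_zero]
      · intro x hx
        have h1 : GoodOn z P (A ∪ C) (x + y) := good_step hsub hc hA hd hdown hx hy
        have h2 := hu' (x + y) h1
        have : x + (y + u') = (x + y) + u' := by
          funext i; show x i + (y i + u' i) = (x i + y i) + u' i; ring
        rwa [this]

/-- The face `Phi z P` of a compatible preorder is nonempty. -/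
lemma phi_nonempty (hsub : Submodular z) (hz0 : z ∅ = 0) (hc : Compatible z P) :
    (Phi z P).Nonempty := by
  have hgood0 : GoodOn z P ∅ 0 := by
    refine ⟨fun i _ => rfl, ?_, ?_⟩
    · intro E hE
      rw [Finset.subset_empty.mp hE, hz0, Finset.sum_empty, WithTop.coe_zero]
    · intro D _ hD
      rw [Finset.subset_empty.mp hD, hz0, Finset.sum_empty, WithTop.coe_zero]
  obtain ⟨u, _, hu⟩ := good_fillup hsub hc (P.downset_univ) (Finset.univ \ ∅).card
    ∅ (P.downset_empty) (Finset.empty_subset _) le_rfl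
  have hgood := hu 0 hgood0
  have hzero : (0 : I → ℝ) + u = u := funext (fun i => zero_add _)
  rw [hzero] at hgood
  refine ⟨u, ⟨?_, ?_⟩, ?_⟩
  · exact hgood.2.2 Finset.univ (P.downset_univ) (Finset.subset_univ _)
  · intro A
    exact hgood.2.1 A (Finset.subset_univ A)
  · intro A hA
    exact hgood.2.2 A hA (Finset.subset_univ A)

end Aux4
section Aux5
open scoped Classical
variable {I : Type*} [Fintype I] [DecidableEq I]
set_option linter.unusedSectionVars false
set_option linter.unusedVariables false

variable {z : Finset I → WithTop ℝ}

lemma psiFam_empty (hz0 : z ∅ = 0) (G : Set (I → ℝ)) : ∅ ∈ PsiFam z G := by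
  constructor
  · rw [hz0, ← WithTop.coe_zero]; exact WithTop.coe_ne_top
  · intro x _
    rw [Finset.sum_empty, hz0, WithTop.coe_zero]

lemma psiFam_univ (hzI : z Finset.univ ≠ ⊤) {G : Set (I → ℝ)} (hG : G ⊆ EGP z) :
    Finset.univ ∈ PsiFam z G := by
  exact ⟨hzI, fun x hx => (hG hx).1⟩

lemma psiFam_union_inter (hsub : Submodular z) {G : Set (I → ℝ)} (hG : G ⊆ EGP z)
    (hne : G.Nonempty) {A B : Finset I} (hA : A ∈ PsiFam z G) (hB : B ∈ PsiFam z G) :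
    A ∪ B ∈ PsiFam z G ∧ A ∩ B ∈ PsiFam z G := by
  have key : ∀ x ∈ G, ((∑ i ∈ A ∪ B, x i : ℝ) : WithTop ℝ) = z (A ∪ B) ∧
      ((∑ i ∈ A ∩ B, x i : ℝ) : WithTop ℝ) = z (A ∩ B) := by
    intro x hx
    have h1 : ((∑ i ∈ A ∪ B, x i : ℝ) : WithTop ℝ) ≤ z (A ∪ B) := (hG hx).2 (A ∪ B)
    have h2 : ((∑ i ∈ A ∩ B, x i : ℝ) : WithTop ℝ) ≤ z (A ∩ B) := (hG hx).2 (A ∩ B)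
    have h3 : z (A ∪ B) + z (A ∩ B) ≤
        ((∑ i ∈ A ∪ B, x i : ℝ) : WithTop ℝ) + ((∑ i ∈ A ∩ B, x i : ℝ) : WithTop ℝ) := by
      have := hsub A B
      rw [← hA.2 x hx, ← hB.2 x hx, ← WithTop.coe_add] at this
      have e : (∑ i ∈ A, x i) + (∑ i ∈ B, x i) =
          (∑ i ∈ A ∪ B, x i) + (∑ i ∈ A ∩ B, x i) := (Finset.sum_union_inter).symm
      rw [e, WithTop.coe_add] at this
      exact this
    have := sandwich2 h1 h2 h3
    exact ⟨this.1.symm, this.2.symm⟩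
  obtain ⟨x₀, hx₀⟩ := hne
  refine ⟨⟨?_, fun x hx => (key x hx).1⟩, ⟨?_, fun x hx => (key x hx).2⟩⟩
  · rw [← (key x₀ hx₀).1]; exact WithTop.coe_ne_top
  · rw [← (key x₀ hx₀).2]; exact WithTop.coe_ne_top

/-- Membership in a finite intersection of finsets. -/
lemma mem_inf_id (s : Finset (Finset I)) (x : I) :
    x ∈ s.inf id ↔ ∀ O ∈ s, x ∈ O := by
  induction s using Finset.induction_on with
  | empty => simp [Finset.inf_empty, Finset.top_eq_univ]
  | @insert A s hA IH =>
    rw [Finset.inf_insert]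
    simp only [id, Finset.inf_eq_inter, Finset.mem_inter] at *
    constructor
    · rintro ⟨h1, h2⟩ O hO
      rcases Finset.mem_insert.mp hO with rfl | hO
      · exact h1
      · exact IH.mp h2 O hO
    · intro h
      exact ⟨h A (Finset.mem_insert_self _ _), IH.mpr (fun O hO => h O (Finset.mem_insert_of_mem hO))⟩

/-- The minimal open set of a point for a family of finsets. -/
noncomputable def minOpen (F : Set (Finset I)) (b : I) : Finset I :=
  ((Finset.univ : Finset (Finset I)).filter (fun O => O ∈ F ∧ b ∈ O)).inf id

lemma mem_minOpen_iff {F : Set (Finset I)} {b x : I} :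
    x ∈ minOpen F b ↔ ∀ O ∈ F, b ∈ O → x ∈ O := by
  rw [minOpen, mem_inf_id]
  constructor
  · intro h O hO hbO
    exact h O (Finset.mem_filter.mpr ⟨Finset.mem_univ _, hO, hbO⟩)
  · intro h O hO
    rw [Finset.mem_filter] at hO
    exact h O hO.2.1 hO.2.2

lemma inf_mem_of_closed {F : Set (Finset I)} (huniv : Finset.univ ∈ F)
    (hinter : ∀ A ∈ F, ∀ B ∈ F, A ∩ B ∈ F) (s : Finset (Finset I))
    (hs : ∀ O ∈ s, O ∈ F) : s.inf id ∈ F := by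
  induction s using Finset.induction_on with
  | empty => rw [Finset.inf_empty, Finset.top_eq_univ]; exact huniv
  | @insert A s hA IH =>
    rw [Finset.inf_insert]
    have h1 : A ∈ F := hs A (Finset.mem_insert_self _ _)
    have h2 : s.inf id ∈ F := IH (fun O hO => hs O (Finset.mem_insert_of_mem hO))
    have : (id A) ⊓ s.inf id = A ∩ s.inf id := rfl
    rw [this]
    exact hinter A h1 _ h2

lemma minOpen_mem {F : Set (Finset I)} (huniv : Finset.univ ∈ F)
    (hinter : ∀ A ∈ F, ∀ B ∈ F, A ∩ B ∈ F) (b : I) : minOpen F b ∈ F := by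
  exact inf_mem_of_closed huniv hinter _ (fun O hO => (Finset.mem_filter.mp hO).2.1)

lemma union_sup_mem_of_closed {F : Set (Finset I)} (hunion : ∀ A ∈ F, ∀ B ∈ F, A ∪ B ∈ F)
    {A : Finset I} (hA : A ∈ F) (s : Finset I) (f : I → Finset I)
    (hf : ∀ i ∈ s, f i ∈ F) : A ∪ s.sup f ∈ F := by
  induction s using Finset.induction_on with
  | empty => rw [Finset.sup_empty, Finset.bot_eq_empty, Finset.union_empty]; exact hA
  | @insert a s ha IH =>
    rw [Finset.sup_insert]
    have h1 : f a ∈ F := hf a (Finset.mem_insert_self _ _)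
    have h2 : A ∪ s.sup f ∈ F := IH (fun i hi => hf i (Finset.mem_insert_of_mem hi))
    have e : A ∪ (f a ⊔ s.sup f) = (f a) ∪ (A ∪ s.sup f) := by
      have : f a ⊔ s.sup f = f a ∪ s.sup f := rfl
      rw [this]
      ext j; simp only [Finset.mem_union]; tauto
    rw [e]
    exact hunion _ h1 _ h2

/-- The downsets of the preorder of a topology family are exactly its members. -/
lemma downset_preOfFam_iff {F : Set (Finset I)} (hempty : ∅ ∈ F) (huniv : Finset.univ ∈ F)
    (hunion : ∀ A ∈ F, ∀ B ∈ F, A ∪ B ∈ F) (hinter : ∀ A ∈ F, ∀ B ∈ F, A ∩ B ∈ F)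
    {A : Finset I} : (preOfFam F).IsDownset A ↔ A ∈ F := by
  constructor
  · intro hA
    have hsup : ∅ ∪ A.sup (fun b => minOpen F b) ∈ F :=
      union_sup_mem_of_closed hunion hempty A _ (fun b _ => minOpen_mem huniv hinter b)
    rw [Finset.empty_union] at hsup
    have : A.sup (fun b => minOpen F b) = A := by
      apply Finset.Subset.antisymm
      · intro j hj
        rw [Finset.mem_sup] at hj
        obtain ⟨b, hb, hjb⟩ := hj
        have : (preOfFam F).le j b := fun O hO hbO => mem_minOpen_iff.mp hjb O hO hbO
        exact hA hb this
      · intro b hb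
        rw [Finset.mem_sup]
        exact ⟨b, hb, mem_minOpen_iff.mpr (fun O _ hbO => hbO)⟩
    rwa [this] at hsup
  · intro hA x y hy hle
    exact hle A hA hy

/-- The exposed face `G` equals the subset of `EGP z` cut out by its tight constraints. -/
lemma exposed_eq_tight_cut (hsub : Submodular z) {G : Set (I → ℝ)} (hG : G ⊆ EGP z)
    (hexp : IsExposed ℝ (EGP z) G) (hne : G.Nonempty) :
    {x | x ∈ EGP z ∧ ∀ A ∈ PsiFam z G, ((∑ i ∈ A, x i : ℝ) : WithTop ℝ) = z A} = G := by
  obtain ⟨l, hl⟩ := hexp hne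
  -- midpoint stability of EGP and of G
  have hEGPmid : ∀ p q : I → ℝ, p ∈ EGP z → q ∈ EGP z →
      (fun i => (p i + q i) / 2) ∈ EGP z := by
    intro p q hp hq
    constructor
    · have e : (∑ i, (p i + q i) / 2) = ((∑ i, p i) + (∑ i, q i)) / 2 := by
        rw [← Finset.sum_add_distrib, ← Finset.sum_div]
      rw [e]
      obtain ⟨r, hr⟩ : ∃ r : ℝ, z Finset.univ = ↑r := by
        refine coe_of_ne_top ?_
        rw [← hp.1]; exact WithTop.coe_ne_top
      have h1 : (∑ i, p i) = r := by
        have := hp.1; rw [hr, WithTop.coe_inj] at this; exact this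
      have h2 : (∑ i, q i) = r := by
        have := hq.1; rw [hr, WithTop.coe_inj] at this; exact this
      rw [h1, h2, hr]
      norm_num
    · intro A
      by_cases hA : z A = ⊤
      · rw [hA]; exact le_top
      · obtain ⟨u, hu⟩ := coe_of_ne_top hA
        have h1 : (∑ i ∈ A, p i) ≤ u := by
          have := hp.2 A; rwa [hu, WithTop.coe_le_coe] at this
        have h2 : (∑ i ∈ A, q i) ≤ u := by
          have := hq.2 A; rwa [hu, WithTop.coe_le_coe] at this
        have e : (∑ i ∈ A, (p i + q i) / 2) = ((∑ i ∈ A, p i) + (∑ i ∈ A, q i)) / 2 := by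
          rw [← Finset.sum_add_distrib, ← Finset.sum_div]
        rw [e, hu, WithTop.coe_le_coe]
        linarith
  have hGmid : ∀ p q : I → ℝ, p ∈ G → q ∈ G → (fun i => (p i + q i) / 2) ∈ G := by
    intro p q hp hq
    have hp' := hl ▸ hp
    have hq' := hl ▸ hq
    obtain ⟨hpE, hpM⟩ := hp'
    obtain ⟨hqE, hqM⟩ := hq'
    rw [hl]
    refine ⟨hEGPmid p q hpE hqE, ?_⟩
    intro y hy
    have e : (fun i => (p i + q i) / 2) = (2⁻¹ : ℝ) • (p + q) := by
      funext i; show (p i + q i) / 2 = 2⁻¹ * (p i + q i); ring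
    have : l (fun i => (p i + q i) / 2) = 2⁻¹ * (l p + l q) := by
      rw [e, map_smul, map_add]
      rfl
    rw [this]
    have h1 := hpM y hy
    have h2 := hqM y hy
    -- l y ≤ l p and l y ≤ l q
    have := hpM y hy
    linarith [hpM y hy, hqM y hy]
  -- a relative interior point
  set N : Finset (Finset I) :=
    (Finset.univ : Finset (Finset I)).filter (fun A => z A ≠ ⊤ ∧ A ∉ PsiFam z G) with hN
  have hstrict : ∀ s : Finset (Finset I), s ⊆ N → ∃ y ∈ G,
      ∀ A ∈ s, (∑ i ∈ A, y i) < (z A).untopD 0 := by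
    intro s
    induction s using Finset.induction_on with
    | empty =>
      intro _
      obtain ⟨y, hy⟩ := hne
      exact ⟨y, hy, fun A hA => absurd hA (Finset.notMem_empty A)⟩
    | @insert A s hA IH =>
      intro hins
      obtain ⟨y, hyG, hys⟩ := IH (fun B hB => hins (Finset.mem_insert_of_mem hB))
      have hAN : A ∈ N := hins (Finset.mem_insert_self _ _)
      rw [hN, Finset.mem_filter] at hAN
      obtain ⟨-, hAt, hAnotin⟩ := hAN
      obtain ⟨u, hu⟩ := coe_of_ne_top hAt
      have : ∃ g ∈ G, (∑ i ∈ A, g i) < u := by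
        by_contra hcon
        push_neg at hcon
        apply hAnotin
        refine ⟨hAt, fun x hx => ?_⟩
        have hle : (∑ i ∈ A, x i) ≤ u := by
          have := (hG hx).2 A; rwa [hu, WithTop.coe_le_coe] at this
        have hge := hcon x hx
        rw [hu, WithTop.coe_inj]
        linarith
      obtain ⟨g, hgG, hglt⟩ := this
      refine ⟨fun i => (y i + g i) / 2, hGmid y g hyG hgG, ?_⟩
      intro B hB
      have e : (∑ i ∈ B, (y i + g i) / 2) = ((∑ i ∈ B, y i) + (∑ i ∈ B, g i)) / 2 := by
        rw [← Finset.sum_add_distrib, ← Finset.sum_div]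
      rcases Finset.mem_insert.mp hB with rfl | hBs
      · have h1 : (∑ i ∈ B, y i) ≤ u := by
          have := (hG hyG).2 B; rwa [hu, WithTop.coe_le_coe] at this
        rw [e, hu, WithTop.untopD_coe]
        linarith
      · have hBN : B ∈ N := hins (Finset.mem_insert_of_mem hBs)
        rw [hN, Finset.mem_filter] at hBN
        obtain ⟨-, hBt, -⟩ := hBN
        obtain ⟨v, hv⟩ := coe_of_ne_top hBt
        have h1 := hys B hBs
        have h2 : (∑ i ∈ B, g i) ≤ v := by
          have := (hG hgG).2 B; rwa [hv, WithTop.coe_le_coe] at this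
        rw [hv, WithTop.untopD_coe] at h1 ⊢
        rw [e]
        linarith
  obtain ⟨y₀, hy₀G, hy₀⟩ := hstrict N subset_rfl
  apply Set.Subset.antisymm
  · -- the tight cut is inside G
    rintro x ⟨hxE, hxt⟩
    -- choose t > 0 small
    have hKey : ∃ t : ℝ, 0 < t ∧ ∀ A ∈ N,
        (∑ i ∈ A, y₀ i) + t * ((∑ i ∈ A, y₀ i) - (∑ i ∈ A, x i)) ≤ (z A).untopD 0 := by
      rcases Finset.eq_empty_or_nonempty N with hNe | hNne
      · exact ⟨1, one_pos, fun A hA => absurd hA (by rw [hNe]; exact Finset.notMem_empty A)⟩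
      · set ε : ℝ := (N.image (fun A => (z A).untopD 0 - ∑ i ∈ A, y₀ i)).min'
          (hNne.image _) with hε
        have hεpos : 0 < ε := by
          obtain ⟨A₀, hA₀, hval⟩ := Finset.mem_image.mp
            ((N.image (fun A => (z A).untopD 0 - ∑ i ∈ A, y₀ i)).min'_mem (hNne.image _))
          rw [hε, ← hval]
          have := hy₀ A₀ hA₀
          linarith
        set K : ℝ := (N.image (fun A => |(∑ i ∈ A, y₀ i) - (∑ i ∈ A, x i)|)).max'
          (hNne.image _) with hK
        have hK0 : 0 ≤ K := by
          obtain ⟨A₀, hA₀⟩ := hNne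
          have hmem : |(∑ i ∈ A₀, y₀ i) - (∑ i ∈ A₀, x i)| ∈
              N.image (fun A => |(∑ i ∈ A, y₀ i) - (∑ i ∈ A, x i)|) :=
            Finset.mem_image.mpr ⟨A₀, hA₀, rfl⟩
          exact le_trans (abs_nonneg _) (Finset.le_max' _ _ hmem)
        refine ⟨ε / (K + 1), by positivity, ?_⟩
        intro A hA
        have h1 : ε ≤ (z A).untopD 0 - ∑ i ∈ A, y₀ i :=
          Finset.min'_le _ _ (Finset.mem_image.mpr ⟨A, hA, rfl⟩)
        have hmem2 : |(∑ i ∈ A, y₀ i) - (∑ i ∈ A, x i)| ∈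
            N.image (fun A => |(∑ i ∈ A, y₀ i) - (∑ i ∈ A, x i)|) :=
          Finset.mem_image.mpr ⟨A, hA, rfl⟩
        have h2 : |(∑ i ∈ A, y₀ i) - (∑ i ∈ A, x i)| ≤ K := Finset.le_max' _ _ hmem2
        have h3 : (ε / (K + 1)) * ((∑ i ∈ A, y₀ i) - (∑ i ∈ A, x i)) ≤ (ε / (K + 1)) * K := by
          apply mul_le_mul_of_nonneg_left _ (by positivity)
          exact le_trans (le_abs_self _) h2
        have h4 : (ε / (K + 1)) * K < ε := by
          rw [div_mul_eq_mul_div, div_lt_iff₀ (by linarith)]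
          nlinarith
        linarith
    obtain ⟨t, htpos, ht⟩ := hKey
    set w : I → ℝ := fun i => y₀ i + t * (y₀ i - x i) with hw
    have hwE : w ∈ EGP z := by
      constructor
      · obtain ⟨r, hr⟩ : ∃ r : ℝ, z Finset.univ = ↑r := by
          refine coe_of_ne_top ?_
          rw [← hxE.1]; exact WithTop.coe_ne_top
        have h1 : (∑ i, y₀ i) = r := by
          have := (hG hy₀G).1; rw [hr, WithTop.coe_inj] at this; exact this
        have h2 : (∑ i, x i) = r := by
          have := hxE.1; rw [hr, WithTop.coe_inj] at this; exact this
        have e : (∑ i, w i) = (∑ i, y₀ i) + t * ((∑ i, y₀ i) - (∑ i, x i)) := by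
          rw [hw]
          rw [Finset.sum_add_distrib, ← Finset.mul_sum, Finset.sum_sub_distrib]
        rw [e, h1, h2, hr]
        norm_num
      · intro A
        by_cases hAt : z A = ⊤
        · rw [hAt]; exact le_top
        · obtain ⟨u, hu⟩ := coe_of_ne_top hAt
          have e : (∑ i ∈ A, w i) = (∑ i ∈ A, y₀ i) + t * ((∑ i ∈ A, y₀ i) - (∑ i ∈ A, x i)) := by
            rw [hw]
            rw [Finset.sum_add_distrib, ← Finset.mul_sum, Finset.sum_sub_distrib]
          by_cases hAF : A ∈ PsiFam z G
          · have h1 : (∑ i ∈ A, y₀ i) = u := by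
              have := hAF.2 y₀ hy₀G; rw [hu, WithTop.coe_inj] at this; exact this
            have h2 : (∑ i ∈ A, x i) = u := by
              have := hxt A hAF; rw [hu, WithTop.coe_inj] at this; exact this
            rw [e, h1, h2, hu, WithTop.coe_le_coe]
            norm_num
          · have hAN : A ∈ N := by
              rw [hN, Finset.mem_filter]
              exact ⟨Finset.mem_univ _, hAt, hAF⟩
            have := ht A hAN
            rw [e, hu, WithTop.coe_le_coe]
            rw [hu, WithTop.untopD_coe] at this
            exact this
    -- maximality transfers
    have hy₀M : ∀ y ∈ EGP z, l y ≤ l y₀ := by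
      have := hl ▸ hy₀G
      exact this.2
    have hxM : l x ≤ l y₀ := hy₀M x hxE
    have hwM : l w ≤ l y₀ := hy₀M w hwE
    have hlw : l w = (1 + t) * l y₀ - t * l x := by
      have e : w = (1 + t) • y₀ - t • x := by
        funext i
        show y₀ i + t * (y₀ i - x i) = (1 + t) * y₀ i - t * x i
        ring
      rw [e, map_sub, map_smul, map_smul]
      show (1 + t) * l y₀ - t * l x = _
      rfl
    have : l y₀ ≤ l x := by
      rw [hlw] at hwM
      nlinarith
    have hxmax : ∀ y ∈ EGP z, l y ≤ l x := by
      intro y hy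
      calc l y ≤ l y₀ := hy₀M y hy
        _ ≤ l x := this
    rw [hl]
    exact ⟨hxE, hxmax⟩
  · intro g hg
    exact ⟨hG hg, fun A hA => hA.2 g hg⟩

end Aux5
section Aux6
open scoped Classical
variable {I : Type*} [Fintype I] [DecidableEq I]
set_option linter.unusedSectionVars false
set_option linter.unusedVariables false

variable {z : Finset I → WithTop ℝ} {P : Preo I}

lemma Preo.ext' {P Q : Preo I} (h : ∀ a b, P.le a b ↔ Q.le a b) : P = Q := by
  obtain ⟨l1, r1, t1⟩ := P
  obtain ⟨l2, r2, t2⟩ := Q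
  have h' : l1 = l2 := funext fun a => funext fun b => propext (h a b)
  subst h'
  rfl

lemma good_empty (hz0 : z ∅ = 0) : GoodOn z P ∅ 0 := by
  refine ⟨fun i _ => rfl, ?_, ?_⟩
  · intro E hE
    rw [Finset.subset_empty.mp hE, hz0, Finset.sum_empty, WithTop.coe_zero]
  · intro D _ hD
    rw [Finset.subset_empty.mp hD, hz0, Finset.sum_empty, WithTop.coe_zero]

lemma good_univ_mem_phi {x : I → ℝ} (hx : GoodOn z P Finset.univ x) : x ∈ Phi z P := by
  refine ⟨⟨?_, ?_⟩, ?_⟩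
  · exact hx.2.2 Finset.univ (P.downset_univ) (Finset.subset_univ _)
  · intro A
    exact hx.2.1 A (Finset.subset_univ A)
  · intro A hA
    exact hx.2.2 A hA (Finset.subset_univ A)

lemma phi_subset_EGP : Phi z P ⊆ EGP z := fun _ hx => hx.1

/-- `Phi z P` is an exposed face of `EGP z` when it is nonempty. -/
lemma phi_exposed (hc : Compatible z P) (hnept : (Phi z P).Nonempty) :
    IsExposed ℝ (EGP z) (Phi z P) := by
  intro _
  set DS : Finset (Finset I) :=
    (Finset.univ : Finset (Finset I)).filter (fun D => P.IsDownset D) with hDS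
  set l : (I → ℝ) →L[ℝ] ℝ :=
    ∑ D ∈ DS, ∑ i ∈ D, ContinuousLinearMap.proj (R := ℝ) (φ := fun _ : I => ℝ) i with hldef
  have hlval : ∀ x : I → ℝ, l x = ∑ D ∈ DS, ∑ i ∈ D, x i := by
    intro x
    rw [hldef]
    rw [ContinuousLinearMap.sum_apply]
    refine Finset.sum_congr rfl (fun D hD => ?_)
    rw [ContinuousLinearMap.sum_apply]
    exact Finset.sum_congr rfl (fun i _ => rfl)
  have hDfin : ∀ D ∈ DS, z D ≠ ⊤ := by
    intro D hD
    exact hc.1 D (Finset.mem_filter.mp hD).2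
  set V : ℝ := ∑ D ∈ DS, (z D).untopD 0 with hV
  have hterm : ∀ x, x ∈ EGP z → ∀ D ∈ DS, (∑ i ∈ D, x i) ≤ (z D).untopD 0 := by
    intro x hx D hD
    obtain ⟨u, hu⟩ := coe_of_ne_top (hDfin D hD)
    have := hx.2 D
    rw [hu, WithTop.coe_le_coe] at this
    rw [hu, WithTop.untopD_coe]
    exact this
  have hmax : ∀ x, x ∈ EGP z → l x ≤ V := by
    intro x hx
    rw [hlval, hV]
    exact Finset.sum_le_sum (hterm x hx)
  have hphiv : ∀ x, x ∈ Phi z P → l x = V := by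
    intro x hx
    rw [hlval, hV]
    refine Finset.sum_congr rfl (fun D hD => ?_)
    obtain ⟨u, hu⟩ := coe_of_ne_top (hDfin D hD)
    have := hx.2 D (Finset.mem_filter.mp hD).2
    rw [hu, WithTop.coe_inj] at this
    rw [hu, WithTop.untopD_coe]
    exact this
  obtain ⟨x₀, hx₀⟩ := hnept
  refine ⟨l, ?_⟩
  ext x
  constructor
  · intro hx
    refine ⟨hx.1, fun y hy => ?_⟩
    rw [hphiv x hx]
    exact hmax y hy
  · rintro ⟨hxE, hxM⟩
    have hxV : l x = V := by
      have h1 : l x ≤ V := hmax x hxE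
      have h2 : V ≤ l x := by
        rw [← hphiv x₀ hx₀]
        exact hxM x₀ (phi_subset_EGP hx₀)
      linarith
    refine ⟨hxE, ?_⟩
    intro A hA
    have hADS : A ∈ DS := Finset.mem_filter.mpr ⟨Finset.mem_univ _, hA⟩
    have heq : ∀ D ∈ DS, (∑ i ∈ D, x i) = (z D).untopD 0 := by
      rw [hlval, hV] at hxV
      intro D hD
      exact (Finset.sum_eq_sum_iff_of_le (hterm x hxE)).mp hxV D hD
    obtain ⟨u, hu⟩ := coe_of_ne_top (hDfin A hADS)
    have := heq A hADS
    rw [hu, WithTop.untopD_coe] at this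
    rw [hu, WithTop.coe_inj]
    exact this

end Aux6
section Aux7
open scoped Classical
variable {I : Type*} [Fintype I] [DecidableEq I]
set_option linter.unusedSectionVars false
set_option linter.unusedVariables false

variable {z : Finset I → WithTop ℝ}

/-- The second half of the statement: `Ψ_z` of a nonempty exposed face conforms, and
`Φ_z ∘ Ψ_z` is the identity on nonempty faces. -/
lemma bullet2 (hsub : Submodular z) (hz0 : z ∅ = 0) (hzI : z Finset.univ ≠ ⊤)
    {G : Set (I → ℝ)} (hG : G ⊆ EGP z) (hexp : IsExposed ℝ (EGP z) G) (hne : G.Nonempty) :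
    Conforms z (PsiPre z G) ∧ Phi z (PsiPre z G) = G := by
  set F : Set (Finset I) := PsiFam z G with hF
  have hempty : ∅ ∈ F := psiFam_empty hz0 G
  have huniv : Finset.univ ∈ F := psiFam_univ hzI hG
  have hunion : ∀ A ∈ F, ∀ B ∈ F, A ∪ B ∈ F :=
    fun A hA B hB => (psiFam_union_inter hsub hG hne hA hB).1
  have hinter : ∀ A ∈ F, ∀ B ∈ F, A ∩ B ∈ F :=
    fun A hA B hB => (psiFam_union_inter hsub hG hne hA hB).2
  have hdiff : ∀ {A : Finset I}, (PsiPre z G).IsDownset A ↔ A ∈ F := by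
    intro A
    exact downset_preOfFam_iff hempty huniv hunion hinter
  have hQle : ∀ a b : I, (PsiPre z G).le a b ↔ ∀ O ∈ F, b ∈ O → a ∈ O := by
    intro a b; exact Iff.rfl
  obtain ⟨g₀, hg₀⟩ := id hne
  have hcompat : Compatible z (PsiPre z G) := by
    constructor
    · intro A hA
      exact (hdiff.mp hA).1
    · intro A B hA hB hAB C₁ C₂ hd hun hinc U hU
      have hAF : A ∈ F := hdiff.mp hA
      have hBF : B ∈ F := hdiff.mp hB
      have hC1B : C₁ ⊆ B \ A := by
        intro j hj; rw [← hun]; exact Finset.mem_union_left _ hj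
      have hC2B : C₂ ⊆ B \ A := by
        intro j hj; rw [← hun]; exact Finset.mem_union_right _ hj
      have hdA1 : Disjoint A C₁ := Finset.disjoint_left.mpr
        (fun j hjA hjC => (Finset.mem_sdiff.mp (hC1B hjC)).2 hjA)
      have hdA2 : Disjoint A C₂ := Finset.disjoint_left.mpr
        (fun j hjA hjC => (Finset.mem_sdiff.mp (hC2B hjC)).2 hjA)
      -- A ∪ C₁ and A ∪ C₂ are tight
      have humem : ∀ (D₁ D₂ : Finset I), D₁ ∪ D₂ = C₁ ∪ C₂ → Disjoint D₁ D₂ →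
          (∀ x ∈ D₁, ∀ y ∈ D₂, ¬(PsiPre z G).le y x) → A ∪ D₁ ∈ F := by
        intro D₁ D₂ hDun hDdis hDinc
        have hD1B : D₁ ⊆ B \ A := by
          intro j hj
          rw [← hun, ← hDun]
          exact Finset.mem_union_left _ hj
        have hmem : A ∪ D₁.sup (fun x => minOpen F x ∩ B) ∈ F := by
          apply union_sup_mem_of_closed hunion hAF
          intro i hi
          exact hinter _ (minOpen_mem huniv hinter i) _ hBF
        have heq : A ∪ D₁.sup (fun x => minOpen F x ∩ B) = A ∪ D₁ := by
          apply Finset.Subset.antisymm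
          · intro j hj
            rcases Finset.mem_union.mp hj with h | h
            · exact Finset.mem_union_left _ h
            · rw [Finset.mem_sup] at h
              obtain ⟨x, hx, hjx⟩ := h
              rw [Finset.mem_inter] at hjx
              have hjB : j ∈ B := hjx.2
              have hjle : (PsiPre z G).le j x :=
                fun O hO hxO => mem_minOpen_iff.mp hjx.1 O hO hxO
              by_cases hjA : j ∈ A
              · exact Finset.mem_union_left _ hjA
              · have hjBA : j ∈ B \ A := Finset.mem_sdiff.mpr ⟨hjB, hjA⟩
                rw [← hun, ← hDun, Finset.mem_union] at hjBA
                rcases hjBA with h | h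
                · exact Finset.mem_union_right _ h
                · exact absurd hjle (hDinc x hx j h)
          · intro j hj
            rcases Finset.mem_union.mp hj with h | h
            · exact Finset.mem_union_left _ h
            · refine Finset.mem_union_right _ ?_
              rw [Finset.mem_sup]
              refine ⟨j, h, Finset.mem_inter.mpr ⟨?_, (Finset.mem_sdiff.mp (hD1B h)).1⟩⟩
              exact mem_minOpen_iff.mpr (fun O _ hjO => hjO)
        rwa [heq] at hmem
      have hAC1 : A ∪ C₁ ∈ F := by
        apply humem C₁ C₂ rfl hd
        intro x hx y hy
        exact (hinc x hx y hy).2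
      have hAC2 : A ∪ C₂ ∈ F := by
        apply humem C₂ C₁ (Finset.union_comm _ _) hd.symm
        intro x hx y hy
        exact (hinc y hy x hx).1
      have hB12 : A ∪ C₁ ∪ C₂ = B := by
        ext j
        have hm : j ∈ C₁ ∨ j ∈ C₂ ↔ j ∈ B ∧ j ∉ A := by
          rw [← Finset.mem_union, hun, Finset.mem_sdiff]
        simp only [Finset.mem_union]
        constructor
        · rintro ((h | h) | h)
          · exact hAB h
          · exact (hm.mp (Or.inl h)).1
          · exact (hm.mp (Or.inr h)).1
        · intro h
          by_cases hjA : j ∈ A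
          · exact Or.inl (Or.inl hjA)
          · rcases hm.mpr ⟨h, hjA⟩ with h' | h'
            · exact Or.inl (Or.inr h')
            · exact Or.inr h'
      have hU' : U ⊆ C₁ ∪ C₂ := by rw [hun]; exact hU
      exact star_split hsub hd hdA1 hdA2 (hAF.2 g₀ hg₀) (hAC1.2 g₀ hg₀) (hAC2.2 g₀ hg₀)
        (by rw [hB12]; exact hBF.2 g₀ hg₀) U hU'
  refine ⟨⟨hcompat, ?_⟩, ?_⟩
  · -- indecomposable splittings come from disconnections
    intro C hC C₁ C₂ hd hun hsplit x hx y hy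
    set Q := PsiPre z G with hQ
    set Am : Finset I := Q.downClosure C \ C with hAm
    have hAmd : Q.IsDownset Am := Q.downset_downClosure_diff hC
    have hBd : Q.IsDownset (Q.downClosure C) := Q.downset_downClosure C
    have hAmF : Am ∈ F := hdiff.mp hAmd
    have hBF : Q.downClosure C ∈ F := hdiff.mp hBd
    have hBeq : Q.downClosure C = Am ∪ C := Q.downClosure_eq_union C
    have hAmC : ∀ j, j ∈ Am → j ∈ C → False := by
      intro j hj hjC
      rw [hAm, Finset.mem_sdiff] at hj
      exact hj.2 hjC
    have hC1C : C₁ ⊆ C := by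
      intro j hj; rw [← hun]; exact Finset.mem_union_left _ hj
    have hC2C : C₂ ⊆ C := by
      intro j hj; rw [← hun]; exact Finset.mem_union_right _ hj
    obtain ⟨r, hr⟩ := coe_of_ne_top hAmF.1
    obtain ⟨bb, hbb⟩ := coe_of_ne_top hBF.1
    have hkey := hsplit C subset_rfl
    have e1 : C ∩ C₁ = C₁ := Finset.inter_eq_right.mpr hC1C
    have e2 : C ∩ C₂ = C₂ := Finset.inter_eq_right.mpr hC2C
    rw [e1, e2] at hkey
    have hzConv : ∀ U : Finset I, zConv z Q C U = coRes z Am U := fun U => rfl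
    rw [hzConv, hzConv, hzConv] at hkey
    have hAmCu : Am ∪ C = Q.downClosure C := hBeq.symm
    have huntop : (z Am).untopD 0 = r := by rw [hr, WithTop.untopD_coe]
    have hLHS : coRes z Am C = ↑(bb - r) := by
      rw [coRes, hAmCu, hbb, huntop, ← WithTop.coe_add]
      congr 1 <;> ring
    rw [hLHS] at hkey
    have hfin1 : z (Am ∪ C₁) ≠ ⊤ := by
      intro h
      rw [coRes, coRes, huntop, h, top_add, top_add] at hkey
      exact WithTop.coe_ne_top hkey
    have hfin2 : z (Am ∪ C₂) ≠ ⊤ := by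
      intro h
      rw [coRes, coRes, huntop, h, top_add, add_top] at hkey
      exact WithTop.coe_ne_top hkey
    obtain ⟨c1, hc1⟩ := coe_of_ne_top hfin1
    obtain ⟨c2, hc2⟩ := coe_of_ne_top hfin2
    have hreal : c1 + c2 = bb + r := by
      rw [coRes, coRes, huntop, hc1, hc2, ← WithTop.coe_add, ← WithTop.coe_add,
        ← WithTop.coe_add, WithTop.coe_inj] at hkey
      linarith
    -- tightness of Am ∪ C₁ and Am ∪ C₂ on G
    have hdisj1 : Disjoint Am C₁ :=
      Finset.disjoint_left.mpr (fun j hj hj' => hAmC j hj (hC1C hj'))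
    have hdisj2 : Disjoint Am C₂ :=
      Finset.disjoint_left.mpr (fun j hj hj' => hAmC j hj (hC2C hj'))
    have htight : ∀ g ∈ G, ((∑ i ∈ Am ∪ C₁, g i : ℝ) : WithTop ℝ) = z (Am ∪ C₁) ∧
        ((∑ i ∈ Am ∪ C₂, g i : ℝ) : WithTop ℝ) = z (Am ∪ C₂) := by
      intro g hg
      have hgAm : (∑ i ∈ Am, g i) = r := by
        have := hAmF.2 g hg; rw [hr, WithTop.coe_inj] at this; exact this
      have hgB : (∑ i ∈ Q.downClosure C, g i) = bb := by
        have := hBF.2 g hg; rw [hbb, WithTop.coe_inj] at this; exact this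
      have hs1 : (∑ i ∈ Am ∪ C₁, g i) = r + ∑ i ∈ C₁, g i := by
        rw [Finset.sum_union hdisj1, hgAm]
      have hs2 : (∑ i ∈ Am ∪ C₂, g i) = r + ∑ i ∈ C₂, g i := by
        rw [Finset.sum_union hdisj2, hgAm]
      have hsB : bb = r + ((∑ i ∈ C₁, g i) + (∑ i ∈ C₂, g i)) := by
        have hdAmC : Disjoint Am C :=
          Finset.disjoint_left.mpr (fun j hj hj' => hAmC j hj hj')
        have : (∑ i ∈ Q.downClosure C, g i) = (∑ i ∈ Am, g i) + ∑ i ∈ C, g i := by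
          rw [hBeq]; exact Finset.sum_union hdAmC
        rw [hgB, hgAm] at this
        rw [this]
        congr 1
        rw [← hun]
        exact Finset.sum_union hd
      have hf1 : ((∑ i ∈ Am ∪ C₁, g i : ℝ) : WithTop ℝ) ≤ z (Am ∪ C₁) := (hG hg).2 _
      have hf2 : ((∑ i ∈ Am ∪ C₂, g i : ℝ) : WithTop ℝ) ≤ z (Am ∪ C₂) := (hG hg).2 _
      rw [hc1] at hf1
      rw [hc2] at hf2
      rw [WithTop.coe_le_coe] at hf1 hf2
      have h1 : (∑ i ∈ Am ∪ C₁, g i) = c1 := by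
        rw [hs1] at hf1 ⊢
        rw [hs2] at hf2
        linarith
      have h2 : (∑ i ∈ Am ∪ C₂, g i) = c2 := by
        rw [hs1] at hf1
        rw [hs2] at hf2 ⊢
        linarith
      rw [h1, h2, hc1, hc2]
      exact ⟨rfl, rfl⟩
    have hF1 : Am ∪ C₁ ∈ F := ⟨hfin1, fun g hg => (htight g hg).1⟩
    have hF2 : Am ∪ C₂ ∈ F := ⟨hfin2, fun g hg => (htight g hg).2⟩
    constructor
    · -- ¬ Q.le x y using the open set Am ∪ C₂
      intro hle
      have hyO : y ∈ Am ∪ C₂ := Finset.mem_union_right _ hy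
      have hxO : x ∈ Am ∪ C₂ := hle _ hF2 hyO
      rcases Finset.mem_union.mp hxO with h | h
      · exact hAmC x h (hC1C hx)
      · exact Finset.disjoint_left.mp hd hx h
    · intro hle
      have hxO : x ∈ Am ∪ C₁ := Finset.mem_union_right _ hx
      have hyO : y ∈ Am ∪ C₁ := hle _ hF1 hxO
      rcases Finset.mem_union.mp hyO with h | h
      · exact hAmC y h (hC2C hy)
      · exact Finset.disjoint_left.mp hd.symm hy h
  · -- Phi (Psi G) = G
    have hcut := exposed_eq_tight_cut hsub hG hexp hne
    have hPhiPsi : Phi z (PsiPre z G) =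
        {x | x ∈ EGP z ∧ ∀ A ∈ PsiFam z G, ((∑ i ∈ A, x i : ℝ) : WithTop ℝ) = z A} := by
      ext x
      constructor
      · rintro ⟨hxE, hxt⟩
        exact ⟨hxE, fun A hA => hxt A (hdiff.mpr hA)⟩
      · rintro ⟨hxE, hxt⟩
        exact ⟨hxE, fun A hA => hxt A (hdiff.mp hA)⟩
    rw [hPhiPsi, hcut]

end Aux7
section Aux8
open scoped Classical
variable {I : Type*} [Fintype I] [DecidableEq I]
set_option linter.unusedSectionVars false
set_option linter.unusedVariables false

variable {z : Finset I → WithTop ℝ} {P : Preo I}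

/-- A set tight on all of `Phi z P` does not cut any bubble of a conforming preorder. -/
lemma saturation (hsub : Submodular z) (hz0 : z ∅ = 0) (hP : Conforms z P)
    {As : Finset I} (hAs : As ∈ PsiFam z (Phi z P)) (a : I) :
    As ∩ P.bubble a = ∅ ∨ P.bubble a ⊆ As := by
  have hc := hP.1
  set C : Finset I := P.bubble a with hCdef
  set Am : Finset I := P.downClosure C \ C with hAm
  have hconv : P.ConvexF C := P.convexF_bubble a
  have hAmd : P.IsDownset Am := P.downset_downClosure_diff hconv
  have hBeq : P.downClosure C = Am ∪ C := P.downClosure_eq_union C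
  have hBd : P.IsDownset (Am ∪ C) := by rw [← hBeq]; exact P.downset_downClosure C
  have hdisjAmC : Am ∩ C = ∅ := by
    rw [hAm]
    ext j
    simp only [Finset.mem_inter, Finset.mem_sdiff, Finset.notMem_empty, iff_false]
    tauto
  have hw : ∀ S T : Finset I, S ⊆ C → T ⊆ C →
      coRes z Am (S ∪ T) + coRes z Am (S ∩ T) ≤ coRes z Am S + coRes z Am T :=
    fun S T _ _ => coRes_submod hsub Am S T (Finset.subset_univ _) (Finset.subset_univ _)
  have hw0 : coRes z Am ∅ = 0 := coRes_empty (hc.1 Am hAmd)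
  have hwC : coRes z Am C ≠ ⊤ := by
    rw [coRes]
    intro h
    rcases WithTop.add_eq_top.mp h with h' | h'
    · exact (hc.1 (Am ∪ C) hBd) h'
    · exact WithTop.coe_ne_top h'
  -- a fixed partial point on Am
  obtain ⟨u0, hu0supp, hu0⟩ := good_fillup hsub hc hAmd ((Am \ ∅).card) ∅
    P.downset_empty (Finset.empty_subset _) le_rfl
  have hxm : GoodOn z P Am ((0 : I → ℝ) + u0) := hu0 0 (good_empty hz0)
  set xm : I → ℝ := (0 : I → ℝ) + u0 with hxmdef
  -- a fixed completion from Am ∪ C to univ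
  obtain ⟨u, husupp, hufill⟩ := good_fillup hsub hc P.downset_univ
    ((Finset.univ \ (Am ∪ C)).card) (Am ∪ C) hBd (Finset.subset_univ _) le_rfl
  have hgPhi : ∀ y, IsBase (coRes z Am) C y → ((xm + y) + u) ∈ Phi z P := by
    intro y hy
    exact good_univ_mem_phi (hufill _ (good_step hsub hc hAmd hdisjAmC hBd hxm hy))
  -- constancy of the tight functional over the base polytope
  have hconst : ∀ y y', IsBase (coRes z Am) C y → IsBase (coRes z Am) C y' →
      (∑ i ∈ As ∩ C, y i) = (∑ i ∈ As ∩ C, y' i) := by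
    intro y y' hy hy'
    obtain ⟨v, hv⟩ := coe_of_ne_top hAs.1
    have h1 := hAs.2 _ (hgPhi y hy)
    have h2 := hAs.2 _ (hgPhi y' hy')
    rw [hv, WithTop.coe_inj] at h1 h2
    have e : ∀ w : I → ℝ, IsBase (coRes z Am) C w →
        (∑ i ∈ As, ((xm + w) + u) i) = (∑ i ∈ As, (xm + u) i) + ∑ i ∈ As ∩ C, w i := by
      intro w hw'
      have : (∑ i ∈ As, ((xm + w) + u) i) =
          (∑ i ∈ As, xm i) + (∑ i ∈ As, w i) + (∑ i ∈ As, u i) := by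
        have e1 : ∀ i, ((xm + w) + u) i = xm i + w i + u i := fun i => rfl
        simp only [e1]
        rw [Finset.sum_add_distrib, Finset.sum_add_distrib]
      rw [this, sum_restrict_support w C As hw'.1]
      have : (∑ i ∈ As, (xm + u) i) = (∑ i ∈ As, xm i) + (∑ i ∈ As, u i) := by
        have e1 : ∀ i, (xm + u) i = xm i + u i := fun i => rfl
        simp only [e1]
        rw [Finset.sum_add_distrib]
      rw [this]
      ring
    rw [e y hy] at h1
    rw [e y' hy'] at h2
    linarith
  have hSinC : As ∩ C ⊆ C := Finset.inter_subset_right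
  have hsplit := const_split hw hw0 hwC hSinC hconst
  by_cases hCne : (As ∩ C).Nonempty
  · by_cases hC2ne : (C \ (As ∩ C)).Nonempty
    · exfalso
      have hun : (As ∩ C) ∪ (C \ (As ∩ C)) = C := by
        ext j
        simp only [Finset.mem_union, Finset.mem_inter, Finset.mem_sdiff]
        tauto
      have hdisj : Disjoint (As ∩ C) (C \ (As ∩ C)) :=
        Finset.disjoint_left.mpr (fun j hj hj' => (Finset.mem_sdiff.mp hj').2 hj)
      have hzsplit : ∀ U ⊆ C, zConv z P C U =
          zConv z P C (U ∩ (As ∩ C)) + zConv z P C (U ∩ (C \ (As ∩ C))) := by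
        intro U hU
        have h := hsplit U hU
        have e : U ∩ (C \ (As ∩ C)) = U \ (As ∩ C) := by
          ext j
          simp only [Finset.mem_inter, Finset.mem_sdiff]
          have := hU
          constructor
          · rintro ⟨h1, h2, h3⟩; exact ⟨h1, h3⟩
          · rintro ⟨h1, h2⟩; exact ⟨h1, hU h1, h2⟩
        rw [zConv, zConv, zConv, ← hAm, e]
        exact h
      have hcon := hP.2 C hconv (As ∩ C) (C \ (As ∩ C)) hdisj hun hzsplit
      obtain ⟨x₁, hx₁⟩ := hCne
      obtain ⟨y₁, hy₁⟩ := hC2ne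
      have hle : P.le x₁ y₁ := by
        have hx₁C : x₁ ∈ C := (Finset.mem_inter.mp hx₁).2
        have hy₁C : y₁ ∈ C := (Finset.mem_sdiff.mp hy₁).1
        rw [hCdef, P.mem_bubble] at hx₁C hy₁C
        exact P.le_trans hx₁C.2 hy₁C.1
      exact (hcon x₁ hx₁ y₁ hy₁).1 hle
    · right
      intro j hj
      rw [Finset.not_nonempty_iff_eq_empty] at hC2ne
      by_contra hjAs
      have : j ∈ C \ (As ∩ C) := Finset.mem_sdiff.mpr
        ⟨hj, fun h => hjAs (Finset.mem_inter.mp h).1⟩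
      rw [hC2ne] at this
      exact Finset.notMem_empty j this
  · left
    exact Finset.not_nonempty_iff_eq_empty.mp hCne

end Aux8
section Aux9
open scoped Classical
variable {I : Type*} [Fintype I] [DecidableEq I]
set_option linter.unusedSectionVars false
set_option linter.unusedVariables false

variable {z : Finset I → WithTop ℝ} {P : Preo I}

/-- Every set tight on all of `Phi z P` is a downset of the conforming preorder `P`. -/
lemma tight_is_downset (hsub : Submodular z) (hz0 : z ∅ = 0) (hzI : z Finset.univ ≠ ⊤)
    (hP : Conforms z P) {As : Finset I} (hAs : As ∈ PsiFam z (Phi z P)) :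
    P.IsDownset As := by
  have hc := hP.1
  have hne : (Phi z P).Nonempty := phi_nonempty hsub hz0 hc
  obtain ⟨g, hg⟩ := id hne
  have hG : Phi z P ⊆ EGP z := phi_subset_EGP
  have hunion : ∀ A ∈ PsiFam z (Phi z P), ∀ B ∈ PsiFam z (Phi z P),
      A ∪ B ∈ PsiFam z (Phi z P) :=
    fun A hA B hB => (psiFam_union_inter hsub hG hne hA hB).1
  have hinter : ∀ A ∈ PsiFam z (Phi z P), ∀ B ∈ PsiFam z (Phi z P),
      A ∩ B ∈ PsiFam z (Phi z P) :=
    fun A hA B hB => (psiFam_union_inter hsub hG hne hA hB).2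
  have hdownF : ∀ {D : Finset I}, P.IsDownset D → D ∈ PsiFam z (Phi z P) :=
    fun {D} hD => ⟨hc.1 D hD, fun x hx => hx.2 D hD⟩
  by_contra hnd
  have hnd2 : ¬ ∀ x y : I, y ∈ As → P.le x y → x ∈ As :=
    fun h => hnd (fun {x y} hy hle => h x y hy hle)
  push_neg at hnd2
  obtain ⟨x0, y0, hy0, hle0, hx0⟩ := hnd2
  -- minimal violating pair
  set Vs : Finset (I × I) := (Finset.univ ×ˢ Finset.univ).filter
    (fun p => P.le p.1 p.2 ∧ p.2 ∈ As ∧ p.1 ∉ As) with hVs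
  have hVsne : Vs.Nonempty := by
    refine ⟨(x0, y0), ?_⟩
    rw [hVs, Finset.mem_filter]
    exact ⟨Finset.mem_product.mpr ⟨Finset.mem_univ _, Finset.mem_univ _⟩, hle0, hy0, hx0⟩
  obtain ⟨p, hp, hpmin⟩ := Finset.exists_min_image Vs
    (fun p => (Finset.univ.filter (fun m => P.le p.1 m ∧ P.le m p.2)).card) hVsne
  obtain ⟨a, b⟩ := p
  rw [hVs, Finset.mem_filter] at hp
  obtain ⟨-, hab, hbAs, haAs⟩ := hp
  set Ct : Finset I := Finset.univ.filter (fun m => P.le a m ∧ P.le m b) with hCt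
  have hmem_itv : ∀ m, m ∈ Ct ↔ P.le a m ∧ P.le m b := by
    intro m; rw [hCt]; simp
  have haCt : a ∈ Ct := (hmem_itv a).mpr ⟨P.le_refl a, hab⟩
  have hbCt : b ∈ Ct := (hmem_itv b).mpr ⟨hab, P.le_refl b⟩
  have hconv : P.ConvexF Ct := by
    intro x y w hx hy h1 h2
    rw [hmem_itv] at hx hy ⊢
    exact ⟨P.le_trans hx.1 h1, P.le_trans h2 hy.2⟩
  have hCa : P.bubble a ⊆ Ct := by
    intro j hj
    rw [P.mem_bubble] at hj
    exact (hmem_itv j).mpr ⟨hj.1, P.le_trans hj.2 hab⟩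
  have hCb : P.bubble b ⊆ Ct := by
    intro j hj
    rw [P.mem_bubble] at hj
    exact (hmem_itv j).mpr ⟨P.le_trans hab hj.1, hj.2⟩
  have hsat := saturation hsub hz0 hP hAs
  have hCbA : P.bubble b ⊆ As := by
    rcases hsat b with h | h
    · exfalso
      have : b ∈ As ∩ P.bubble b := Finset.mem_inter.mpr ⟨hbAs, P.self_mem_bubble b⟩
      rw [h] at this
      exact Finset.notMem_empty b this
    · exact h
  have hCaA : As ∩ P.bubble a = ∅ := by
    rcases hsat a with h | h
    · exact h
    · exact absurd (h (P.self_mem_bubble a)) haAs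
  have hd12 : Disjoint (P.bubble a) (P.bubble b) := by
    rw [Finset.disjoint_left]
    intro j hja hjb
    rw [P.mem_bubble] at hja hjb
    have hba : P.le b a := P.le_trans hjb.1 hja.2
    have : a ∈ P.bubble b := P.mem_bubble.mpr ⟨hba, hab⟩
    exact haAs (hCbA this)
  have hsub1 : Ct ∩ As ⊆ P.bubble b := by
    intro m hm
    rw [Finset.mem_inter] at hm
    by_contra hmCb
    have hamVs : (a, m) ∈ Vs := by
      rw [hVs, Finset.mem_filter]
      exact ⟨Finset.mem_product.mpr ⟨Finset.mem_univ _, Finset.mem_univ _⟩,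
        ((hmem_itv m).mp hm.1).1, hm.2, haAs⟩
    have hsubI : Finset.univ.filter (fun x => P.le a x ∧ P.le x m) ⊆ Ct := by
      intro x hx
      simp only [Finset.mem_filter, Finset.mem_univ, true_and] at hx
      exact (hmem_itv x).mpr ⟨hx.1, P.le_trans hx.2 ((hmem_itv m).mp hm.1).2⟩
    have hbni : b ∉ Finset.univ.filter (fun x => P.le a x ∧ P.le x m) := by
      simp only [Finset.mem_filter, Finset.mem_univ, true_and]
      rintro ⟨-, hbm⟩
      exact hmCb (P.mem_bubble.mpr ⟨hbm, ((hmem_itv m).mp hm.1).2⟩)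
    have hlt := Finset.card_lt_card
      ((Finset.ssubset_iff_of_subset hsubI).mpr ⟨b, hbCt, hbni⟩)
    have := hpmin (a, m) hamVs
    simp only at this
    omega
  have hsub2 : Ct \ As ⊆ P.bubble a := by
    intro m hm
    rw [Finset.mem_sdiff] at hm
    by_contra hmCa
    have hmbVs : (m, b) ∈ Vs := by
      rw [hVs, Finset.mem_filter]
      exact ⟨Finset.mem_product.mpr ⟨Finset.mem_univ _, Finset.mem_univ _⟩,
        ((hmem_itv m).mp hm.1).2, hbAs, hm.2⟩
    have hsubI : Finset.univ.filter (fun x => P.le m x ∧ P.le x b) ⊆ Ct := by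
      intro x hx
      simp only [Finset.mem_filter, Finset.mem_univ, true_and] at hx
      exact (hmem_itv x).mpr ⟨P.le_trans ((hmem_itv m).mp hm.1).1 hx.1, hx.2⟩
    have hani : a ∉ Finset.univ.filter (fun x => P.le m x ∧ P.le x b) := by
      simp only [Finset.mem_filter, Finset.mem_univ, true_and]
      rintro ⟨hma, -⟩
      exact hmCa (P.mem_bubble.mpr ⟨((hmem_itv m).mp hm.1).1, hma⟩)
    have hlt := Finset.card_lt_card
      ((Finset.ssubset_iff_of_subset hsubI).mpr ⟨a, haCt, hani⟩)
    have := hpmin (m, b) hmbVs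
    simp only at this
    omega
  have hCteq : Ct = P.bubble a ∪ P.bubble b := by
    apply Finset.Subset.antisymm
    · intro m hm
      by_cases hmAs : m ∈ As
      · exact Finset.mem_union_right _ (hsub1 (Finset.mem_inter.mpr ⟨hm, hmAs⟩))
      · exact Finset.mem_union_left _ (hsub2 (Finset.mem_sdiff.mpr ⟨hm, hmAs⟩))
    · intro m hm
      rcases Finset.mem_union.mp hm with h | h
      · exact hCa h
      · exact hCb h
  set Am : Finset I := P.downClosure Ct \ Ct with hAm
  have hAmd : P.IsDownset Am := P.downset_downClosure_diff hconv
  have hBeq : P.downClosure Ct = Am ∪ Ct := P.downClosure_eq_union Ct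
  have hAmCt : ∀ j, j ∈ Am → j ∈ Ct → False := by
    intro j hj hjC
    rw [hAm, Finset.mem_sdiff] at hj
    exact hj.2 hjC
  -- Am ∪ bubble a is a downset
  have hD : P.IsDownset (Am ∪ P.bubble a) := by
    intro v w hw hvw
    rcases Finset.mem_union.mp hw with hwAm | hwCa
    · have hwB : w ∈ P.downClosure Ct := (Finset.mem_sdiff.mp hwAm).1
      have hvB : v ∈ P.downClosure Ct := P.downset_downClosure Ct hwB hvw
      by_cases hvCt : v ∈ Ct
      · exfalso
        obtain ⟨c, hc', hwc⟩ := P.mem_downClosure.mp hwB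
        exact (Finset.mem_sdiff.mp hwAm).2 (hconv hvCt hc' hvw hwc)
      · exact Finset.mem_union_left _ (Finset.mem_sdiff.mpr ⟨hvB, hvCt⟩)
    · rw [P.mem_bubble] at hwCa
      have hva : P.le v a := P.le_trans hvw hwCa.2
      have hvB : v ∈ P.downClosure Ct := P.mem_downClosure.mpr ⟨a, haCt, hva⟩
      by_cases hvCt : v ∈ Ct
      · rw [hCteq, Finset.mem_union] at hvCt
        rcases hvCt with h | h
        · exact Finset.mem_union_right _ h
        · exfalso
          rw [P.mem_bubble] at h
          have hba : P.le b a := P.le_trans h.1 hva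
          exact haAs (hCbA (P.mem_bubble.mpr ⟨hba, hab⟩))
      · exact Finset.mem_union_left _ (Finset.mem_sdiff.mpr ⟨hvB, hvCt⟩)
  have hAmF : Am ∈ PsiFam z (Phi z P) := hdownF hAmd
  have hBF : P.downClosure Ct ∈ PsiFam z (Phi z P) := hdownF (P.downset_downClosure Ct)
  have hDF : Am ∪ P.bubble a ∈ PsiFam z (Phi z P) := hdownF hD
  have hEeq : Am ∪ P.bubble b = Am ∪ (As ∩ P.downClosure Ct) := by
    apply Finset.Subset.antisymm
    · intro j hj
      rcases Finset.mem_union.mp hj with h | h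
      · exact Finset.mem_union_left _ h
      · refine Finset.mem_union_right _ (Finset.mem_inter.mpr ⟨hCbA h, ?_⟩)
        exact P.subset_downClosure Ct (hCb h)
    · intro j hj
      rcases Finset.mem_union.mp hj with h | h
      · exact Finset.mem_union_left _ h
      · rw [Finset.mem_inter] at h
        have := h.2
        rw [hBeq, Finset.mem_union] at this
        rcases this with h' | h'
        · exact Finset.mem_union_left _ h'
        · exact Finset.mem_union_right _ (hsub1 (Finset.mem_inter.mpr ⟨h', h.1⟩))
  have hEF : Am ∪ P.bubble b ∈ PsiFam z (Phi z P) := by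
    rw [hEeq]
    exact hunion _ hAmF _ (hinter _ hAs _ hBF)
  -- disjointness
  have hdA1 : Disjoint Am (P.bubble a) :=
    Finset.disjoint_left.mpr (fun j hj hj' => hAmCt j hj (hCa hj'))
  have hdA2 : Disjoint Am (P.bubble b) :=
    Finset.disjoint_left.mpr (fun j hj hj' => hAmCt j hj (hCb hj'))
  -- tightness at g
  have t0 := hAmF.2 g hg
  have t1 := hDF.2 g hg
  have t2 := hEF.2 g hg
  have t3 : ((∑ i ∈ Am ∪ P.bubble a ∪ P.bubble b, g i : ℝ) : WithTop ℝ) =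
      z (Am ∪ P.bubble a ∪ P.bubble b) := by
    have e : Am ∪ P.bubble a ∪ P.bubble b = P.downClosure Ct := by
      rw [hBeq, hCteq, Finset.union_assoc]
    rw [e]
    exact hBF.2 g hg
  have hstar := star_split hsub hd12 hdA1 hdA2 t0 t1 t2 t3
  have hzsplit : ∀ U ⊆ Ct, zConv z P Ct U =
      zConv z P Ct (U ∩ P.bubble a) + zConv z P Ct (U ∩ P.bubble b) := by
    intro U hU
    have hU' : U ⊆ P.bubble a ∪ P.bubble b := by rw [← hCteq]; exact hU
    have := hstar U hU'
    rw [zConv, zConv, zConv, ← hAm]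
    exact this
  have hcon := hP.2 Ct hconv (P.bubble a) (P.bubble b) hd12 hCteq.symm hzsplit
  exact (hcon a (P.self_mem_bubble a) b (P.self_mem_bubble b)).1 hab

end Aux9
/-- `Φ_z` is surjective onto the set of nonempty faces of `Π(z)`, the
image of `Ψ_z` on nonempty faces is exactly the set of preorders conforming to `z`, and
`Φ_z`, `Ψ_z` restrict to mutually inverse bijections between conforming preorders and
nonempty faces of `Π(z)`. -/
theorem faces_conforming_bijection
    {I : Type*} [Fintype I] [DecidableEq I]
    (z : Finset I → WithTop ℝ) (hz0 : z ∅ = 0) (hzI : z Finset.univ ≠ ⊤)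
    (hsub : Submodular z) :
    (∀ P : Preo I, Conforms z P →
      IsExposed ℝ (EGP z) (Phi z P) ∧ (Phi z P).Nonempty ∧ PsiPre z (Phi z P) = P) ∧
    (∀ G : Set (I → ℝ), G ⊆ EGP z → IsExposed ℝ (EGP z) G → G.Nonempty →
      Conforms z (PsiPre z G) ∧ Phi z (PsiPre z G) = G) := by
  constructor
  · intro P hP
    have hc := hP.1
    have hnept : (Phi z P).Nonempty := phi_nonempty hsub hz0 hc
    refine ⟨phi_exposed hc hnept, hnept, ?_⟩
    apply Preo.ext'
    intro a b
    constructor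
    · intro h
      have hAb : P.IsDownset (Finset.univ.filter (fun x => P.le x b)) :=
        P.downset_principal b
      have hmem : Finset.univ.filter (fun x => P.le x b) ∈ PsiFam z (Phi z P) :=
        ⟨hc.1 _ hAb, fun x hx => hx.2 _ hAb⟩
      have hb : b ∈ Finset.univ.filter (fun x => P.le x b) :=
        Finset.mem_filter.mpr ⟨Finset.mem_univ _, P.le_refl b⟩
      have := h _ hmem hb
      exact (Finset.mem_filter.mp this).2
    · intro h A hAF hbA
      exact tight_is_downset hsub hz0 hzI hP hAF hbA h
  · intro G hG hexp hne
    exact bullet2 hsub hz0 hzI hG hexp hne
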